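/- arXiv:2211.03685 — 10 statements merged into one kernel-verified Lean document; each statement's English description precedes it below -/
import Mathlib

section
/- In a finite ordinal potential game, every maximizer of the potential function over the configuration space is a recursive configuration. -/
open Function

variable {ι : Type*} [Fintype ι] [DecidableEq ι] {A : ι → Type*} [∀ i, Fintype (A i)]

/-- `a` is a best response action of player `i` to the profile `x₋ᵢ`. -/
def IsBR (u : ι → (∀ i, A i) → ℝ) (i : ι) (x : ∀ i, A i) (a : A i) : Prop :=
  ∀ b : A i, u i (update x i b) ≤ u i (update x i a)

/-- One step of the best response dynamics: a single player switches to a best response. -/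
def BRStep (u : ι → (∀ i, A i) → ℝ) (x y : ∀ i, A i) : Prop :=
  x ≠ y ∧ ∃ i, IsBR u i x (y i) ∧ ∀ j, j ≠ i → y j = x j

/-- A best response path from `x` to `y`. -/
def BRPath (u : ι → (∀ i, A i) → ℝ) : (∀ i, A i) → (∀ i, A i) → Prop :=
  Relation.ReflTransGen (BRStep u)

/-- A configuration is recursive if every configuration reachable from it by a
best response path can reach it back by a best response path. -/
def Recursive (u : ι → (∀ i, A i) → ℝ) (x : ∀ i, A i) : Prop :=
  ∀ y, BRPath u x y → BRPath u y x

/-- `Ψ` is an ordinal potential for the game with utilities `u`. -/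
def OrdinalPotential (u : ι → (∀ i, A i) → ℝ) (Ψ : (∀ i, A i) → ℝ) : Prop :=
  ∀ i (x y : ∀ i, A i), (∀ j, j ≠ i → x j = y j) → (u i x < u i y ↔ Ψ x < Ψ y)


lemma step_of_max (u : ι → (∀ i, A i) → ℝ) (Ψ : (∀ i, A i) → ℝ)
    (hΨ : OrdinalPotential u Ψ) {b c : ∀ i, A i}
    (hb : ∀ z : ∀ i, A i, Ψ z ≤ Ψ b) (h : BRStep u b c) :
    (∀ z : ∀ i, A i, Ψ z ≤ Ψ c) ∧ BRStep u c b := by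
  obtain ⟨hne, i, hbr, hoff⟩ := h
  have hc : c = update b i (c i) := by
    funext j
    by_cases hj : j = i
    · subst hj; simp
    · simp [update_of_ne hj, hoff j hj]
  have hub : u i b ≤ u i c := by
    have := hbr (b i)
    rwa [update_eq_self, ← hc] at this
  have h1 : ¬ Ψ c < Ψ b := by
    rw [← hΨ i c b fun j hj => hoff j hj]
    exact not_lt.2 hub
  have hmaxc : ∀ z : ∀ i, A i, Ψ z ≤ Ψ c := fun z => le_trans (hb z) (not_lt.1 h1)
  have huc : u i c ≤ u i b := by
    have : ¬ Ψ b < Ψ c := not_lt.2 (hb c)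
    rw [← hΨ i b c fun j hj => (hoff j hj).symm] at this
    exact not_lt.1 this
  refine ⟨hmaxc, hne.symm, i, ?_, fun j hj => (hoff j hj).symm⟩
  intro a
  have e1 : update c i a = update b i a := by rw [hc, update_idem]
  have e2 : update c i (b i) = b := by rw [hc, update_idem, update_eq_self]
  rw [e1, e2]
  calc u i (update b i a) ≤ u i (update b i (c i)) := hbr a
    _ = u i c := by rw [← hc]
    _ ≤ u i b := huc

/-- In a finite ordinal potential game, every maximizer of the potential function
over the configuration space is recursive. -/
theorem potential_maximizer_is_recursive (u : ι → (∀ i, A i) → ℝ) (Ψ : (∀ i, A i) → ℝ)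
    (hΨ : OrdinalPotential u Ψ) (x : ∀ i, A i)
    (hmax : ∀ y : ∀ i, A i, Ψ y ≤ Ψ x) :
    Recursive u x := by
  intro y hy
  suffices h : (∀ z : ∀ i, A i, Ψ z ≤ Ψ y) ∧ BRPath u y x from h.2
  induction hy with
  | refl => exact ⟨hmax, Relation.ReflTransGen.refl⟩
  | tail hpath hstep ih =>
    obtain ⟨hmaxc, hrev⟩ := step_of_max u Ψ hΨ ih.1 hstep
    exact ⟨hmaxc, Relation.ReflTransGen.head hrev ih.2⟩
end

section
/- In a finite ordinal potential game, every recursive configuration is a Nash equilibrium. -/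
open Function

variable {ι : Type*} [Fintype ι] [DecidableEq ι] {A : ι → Type*} [∀ i, Fintype (A i)]

lemma brstep_mono (u : ι → (∀ i, A i) → ℝ) (Ψ : (∀ i, A i) → ℝ)
    (hΨ : OrdinalPotential u Ψ) {x y : ∀ i, A i} (h : BRStep u x y) : Ψ x ≤ Ψ y := by
  obtain ⟨hne, i, hbr, hj⟩ := h
  have hyx : y = update x i (y i) := by
    funext j
    by_cases hji : j = i
    · subst hji; simp
    · rw [update_of_ne hji]; exact hj j hji
  have hux : u i x ≤ u i y := by
    have := hbr (x i)
    rwa [update_eq_self, ← hyx] at this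
  by_contra hlt
  push_neg at hlt
  have := (hΨ i y x (fun j hji => hj j hji)).mpr hlt
  linarith

lemma brpath_mono (u : ι → (∀ i, A i) → ℝ) (Ψ : (∀ i, A i) → ℝ)
    (hΨ : OrdinalPotential u Ψ) {x y : ∀ i, A i} (h : BRPath u x y) : Ψ x ≤ Ψ y := by
  induction h with
  | refl => exact le_refl _
  | tail _ hstep ih => exact le_trans ih (brstep_mono u Ψ hΨ hstep)

/-- In a finite ordinal potential game, every recursive configuration is a Nash
equilibrium: each player's current action is a best response. -/
theorem recursive_is_nash (u : ι → (∀ i, A i) → ℝ) (Ψ : (∀ i, A i) → ℝ)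
    (hΨ : OrdinalPotential u Ψ) (x : ∀ i, A i)
    (hrec : Recursive u x) :
    ∀ i, IsBR u i x (x i) := by
  intro i
  by_contra hnot
  have : Nonempty (A i) := ⟨x i⟩
  obtain ⟨a, ha⟩ := Finite.exists_max (fun b : A i => u i (update x i b))
  have haBR : IsBR u i x a := ha
  have hgt : u i x < u i (update x i a) := by
    simp only [IsBR, not_forall, not_le] at hnot
    obtain ⟨b, hb⟩ := hnot
    rw [update_eq_self] at hb
    exact lt_of_lt_of_le hb (ha b)
  set y := update x i a with hy
  have hne : x ≠ y := by
    intro h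
    rw [← h] at hgt
    exact lt_irrefl _ hgt
  have hstep : BRStep u x y := by
    refine ⟨hne, i, ?_, ?_⟩
    · simpa [hy] using haBR
    · intro j hji; simp [hy, update_of_ne hji]
  have hΨlt : Ψ x < Ψ y := by
    refine (hΨ i x y ?_).mp hgt
    intro j hji; simp [hy, update_of_ne hji]
  have hback := hrec y (Relation.ReflTransGen.single hstep)
  have := brpath_mono u Ψ hΨ hback
  linarith
end

section
/- In a finite ordinal potential game, the set of recursive configurations is invariant with respect to best response paths: if x is recursive and there is a best response path from x to y, then y is recursive. -/
open Function

variable {ι : Type*} [Fintype ι] [DecidableEq ι] {A : ι → Type*} [∀ i, Fintype (A i)]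

/-- In a finite ordinal potential game, the set of recursive configurations is
invariant under best response paths. -/
theorem recursive_invariant_brpath (u : ι → (∀ i, A i) → ℝ) (Ψ : (∀ i, A i) → ℝ)
    (hΨ : OrdinalPotential u Ψ) (x y : ∀ i, A i)
    (hrec : Recursive u x) (hpath : BRPath u x y) :
    Recursive u y := fun z hz =>
  (hrec z (hpath.trans hz)).trans hpath
end

section
/- If u_i(x) = n_i(x_{-i}) / Z(x) for functions n_i not depending on player i's own action and Z(x) = Σ_i n_i(x_{-i}) > 0, then the function Ψ(x) = -log Z(x) is an exact potential for the game with utilities log u_i(x), and an ordinal potential for the game with utilities u_i(x). -/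
open Function

variable {ι : Type*} [Fintype ι] [DecidableEq ι] {A : ι → Type*} [∀ i, Fintype (A i)]

/-- If `u i x = n i x / Z x` where `n i` does not depend on player `i`'s own action
and `Z x = ∑ j, n j x > 0`, then `Ψ x = -log Z x` is an exact potential for the game
with utilities `log ∘ u`, and an ordinal potential for the game with utilities `u`. -/
theorem neg_log_Z_is_potential (u : ι → (∀ i, A i) → ℝ) (n : ι → (∀ i, A i) → ℝ)
    (hpos : ∀ i (x : ∀ i, A i), 0 < n i x)
    (hindep : ∀ i (x : ∀ i, A i) (b : A i), n i (update x i b) = n i x)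
    (hu : ∀ i (x : ∀ i, A i), u i x = n i x / (∑ j, n j x)) :
    (∀ i (x y : ∀ i, A i), (∀ j, j ≠ i → x j = y j) →
        Real.log (u i y) - Real.log (u i x) =
          (-Real.log (∑ j, n j y)) - (-Real.log (∑ j, n j x))) ∧
    OrdinalPotential u (fun x => -Real.log (∑ j, n j x)) := by
  have hZ : ∀ (i : ι) (x : ∀ i, A i), (0:ℝ) < ∑ j, n j x := fun i x =>
    Finset.sum_pos (fun j _ => hpos j x) ⟨i, Finset.mem_univ i⟩
  have hn : ∀ i (x y : ∀ i, A i), (∀ j, j ≠ i → x j = y j) → n i x = n i y := by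
    intro i x y h
    have hy : y = update x i (y i) := by
      funext j
      by_cases hj : j = i
      · subst hj; simp
      · simp [update_of_ne hj, h j hj]
    rw [hy, hindep]
  constructor
  · intro i x y h
    rw [hu, hu, Real.log_div (hpos i y).ne' (hZ i y).ne',
      Real.log_div (hpos i x).ne' (hZ i x).ne', hn i x y h]
    ring
  · intro i x y h
    have hnxy := hn i x y h
    rw [hu, hu, ← hnxy]
    rw [div_lt_div_iff₀ (hZ i x) (hZ i y)]
    constructor
    · intro hlt
      have : ∑ j, n j y < ∑ j, n j x := lt_of_mul_lt_mul_left hlt (hpos i x).le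
      simpa using neg_lt_neg (Real.log_lt_log (hZ i y) this)
    · intro hlt
      dsimp only at hlt
      have h2 : Real.log (∑ j, n j y) < Real.log (∑ j, n j x) := by linarith
      have : ∑ j, n j y < ∑ j, n j x :=
        (Real.log_lt_log_iff (hZ i y) (hZ i x)).mp h2
      exact mul_lt_mul_of_pos_left this (hpos i x)
end

section
/- For the PageRank Markov chain with transition matrix P = βR + (1-β)𝟙η^T, the stationary probability of node i equals π_i = 1 / (1 + (1-β) Σ_j η_j τ_j^i + (β/deg_i) Σ_{j ∈ N_i} τ_j^i), where τ_j^i are expected hitting times of node i. -/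
open Finset

variable {V : Type*} [Fintype V] [DecidableEq V]

/-- The linear system characterizing the expected hitting times `τ j = τ_j^i` of node `i`
for the Markov chain `P = βR + (1-β)𝟙ηᵀ` on the directed graph with
out-neighborhoods `N`. -/
def HittingSystem (N : V → Finset V) (β : ℝ) (η : V → ℝ) (i : V) (τ : V → ℝ) : Prop :=
  τ i = 0 ∧ ∀ j, j ≠ i →
    τ j = 1 + (1 - β) * (∑ k, η k * τ k) + (β / ((N j).card : ℝ)) * ∑ k ∈ N j, τ k

/-- `Reach N j i` : there is a directed walk from `j` to `i` in the graph. -/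
def Reach (N : V → Finset V) : V → V → Prop :=
  Relation.ReflTransGen (fun a b => b ∈ N a)

/-- Kac-type formula for the PageRank chain: the stationary probability of node `i`
for `P = βR + (1-β)𝟙ηᵀ` equals
`1 / (1 + (1-β) Σ_j η_j τ_j + (β/deg_i) Σ_{j∈N_i} τ_j)` where `τ` are the expected
hitting times of `i`. -/
theorem stationary_eq_inv_hitting (N : V → Finset V)
    (hloop : ∀ v, v ∉ N v) (hsink : ∀ v, (N v).Nonempty)
    (β : ℝ) (hβ : β ∈ Set.Ioo (0 : ℝ) 1)
    (η : V → ℝ) (hη0 : ∀ v, 0 < η v) (hη1 : ∑ v, η v = 1) (i : V)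
    (τ : V → ℝ) (hτ : HittingSystem N β η i τ)
    (π : V → ℝ) (hπ0 : ∀ v, 0 ≤ π v) (hπ1 : ∑ v, π v = 1)
    (hstat : ∀ k, π k = ∑ j, π j *
      (β * (if k ∈ N j then ((N j).card : ℝ)⁻¹ else 0) + (1 - β) * η k)) :
    π i = 1 / (1 + (1 - β) * (∑ j, η j * τ j)
        + (β / ((N i).card : ℝ)) * ∑ j ∈ N i, τ j) := by
  obtain ⟨hτi, hτr⟩ := hτ
  set P : V → V → ℝ :=
    fun j k => β * (if k ∈ N j then ((N j).card : ℝ)⁻¹ else 0) + (1 - β) * η k with hP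
  set c : ℝ := 1 + (1 - β) * (∑ j, η j * τ j) + (β / ((N i).card : ℝ)) * ∑ j ∈ N i, τ j
    with hc
  -- row sums of P against τ
  have hsum : ∀ j, ∑ k, P j k * τ k
      = (1 - β) * (∑ k, η k * τ k) + (β / ((N j).card : ℝ)) * ∑ k ∈ N j, τ k := by
    intro j
    have h1 : ∑ k, P j k * τ k
        = β * ∑ k, (if k ∈ N j then ((N j).card : ℝ)⁻¹ else 0) * τ k
          + (1 - β) * ∑ k, η k * τ k := by
      simp only [hP, add_mul, Finset.sum_add_distrib, Finset.mul_sum, mul_assoc]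
    have h2 : ∑ k, (if k ∈ N j then ((N j).card : ℝ)⁻¹ else 0) * τ k
        = ((N j).card : ℝ)⁻¹ * ∑ k ∈ N j, τ k := by
      calc ∑ k, (if k ∈ N j then ((N j).card : ℝ)⁻¹ else 0) * τ k
          = ∑ k, (if k ∈ N j then ((N j).card : ℝ)⁻¹ * τ k else 0) := by
            refine Finset.sum_congr rfl fun k _ => ?_
            by_cases hk : k ∈ N j <;> simp [hk]
        _ = ∑ k ∈ Finset.univ ∩ N j, ((N j).card : ℝ)⁻¹ * τ k :=
            Finset.sum_ite_mem _ _ _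
        _ = ((N j).card : ℝ)⁻¹ * ∑ k ∈ N j, τ k := by
            rw [Finset.univ_inter, Finset.mul_sum]
    rw [h1, h2, div_eq_mul_inv]
    ring
  -- the key double-counting identity
  have key1 : ∑ j, π j * (1 + ∑ k, P j k * τ k) = π i * c + ∑ j, π j * τ j := by
    have hterm : ∀ j, π j * (1 + ∑ k, P j k * τ k)
        = π j * τ j + (if j = i then π i * c else 0) := by
      intro j
      by_cases hj : j = i
      · subst hj
        rw [hτi, mul_zero, zero_add, if_pos rfl, hsum j, hc]
        ring
      · rw [hsum j, if_neg hj, add_zero]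
        congr 1
        rw [hτr j hj]; ring
    simp only [hterm, Finset.sum_add_distrib]
    rw [Finset.sum_ite_eq' Finset.univ i (fun _ => π i * c), if_pos (Finset.mem_univ i)]
    ring
  have key2 : ∑ j, π j * (1 + ∑ k, P j k * τ k) = 1 + ∑ k, π k * τ k := by
    simp only [mul_add, mul_one, Finset.sum_add_distrib, hπ1]
    congr 1
    have : ∀ j, π j * ∑ k, P j k * τ k = ∑ k, π j * P j k * τ k := by
      intro j; rw [Finset.mul_sum]; simp [mul_assoc]
    simp only [this]
    rw [Finset.sum_comm]
    refine Finset.sum_congr rfl fun k _ => ?_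
    rw [← Finset.sum_mul, ← hstat k]
  have hmul : π i * c = 1 := by
    have := key1.symm.trans key2
    linarith
  have hc0 : c ≠ 0 := fun h => by simp [h] at hmul
  field_simp [hc0] at hmul ⊢
  linarith [hmul]
end

section
/- In a centrality game, an action x_i is a best response for player i to x_{-i} if and only if every node k not in x_i has expected hitting time τ_k^i(x_{-i}) at least as large as the maximum expected hitting time τ_j^i(x_{-i}) over j ∈ x_i. Equivalently, the best response set consists exactly of the deg_i-subsets of V∖{i} minimizing Σ_{j ∈ x_i} τ_j^i(x_{-i}). -/
open Function Finset Matrix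

variable {V : Type*} [Fintype V] [DecidableEq V]

/-- The PageRank centrality vector `π = (1-β)(I - βRᵀ)⁻¹ η` of the directed graph
with out-neighborhoods `E`, discount factor `β` and intrinsic centrality `η`. -/
noncomputable def pagerank (β : ℝ) (η : V → ℝ) (E : V → Finset V) : V → ℝ :=
  (1 - β) • (((1 : Matrix V V ℝ) -
      β • (Matrix.of fun j k : V => if k ∈ E j then ((E j).card : ℝ)⁻¹ else 0)ᵀ)⁻¹).mulVec η

/-- A configuration of the centrality game with out-degree profile `d`:
each node `i` wires `d i` out-links, none of them a self-loop. -/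
def ValidConf (d : V → ℕ) (x : V → Finset V) : Prop :=
  ∀ i, i ∉ x i ∧ (x i).card = d i

/-- Nash equilibrium of the centrality game `Γ(V,β,η,d)`: a valid configuration in
which no player can strictly increase her own PageRank centrality by rewiring her
out-links. -/
def NashEq (β : ℝ) (η : V → ℝ) (d : V → ℕ) (x : V → Finset V) : Prop :=
  ValidConf d x ∧ ∀ i (b : Finset V), i ∉ b → b.card = d i →
    pagerank β η (update x i b) i ≤ pagerank β η x i

/-- Auxiliary: comparing sums over two finsets of equal cardinality when every value on
the first is at most every value on the second. -/
lemma sum_le_sum_of_card_eq {s t : Finset V} (f : V → ℝ) (hcard : s.card = t.card)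
    (h : ∀ j ∈ s, ∀ k ∈ t, f j ≤ f k) : ∑ j ∈ s, f j ≤ ∑ k ∈ t, f k := by
  rcases s.eq_empty_or_nonempty with hs | hs
  · subst hs
    have : t = ∅ := by
      rw [← Finset.card_eq_zero]; simpa using hcard.symm
    simp [this]
  · have ht : t.Nonempty := by
      rw [← Finset.card_pos, ← hcard, Finset.card_pos]; exact hs
    obtain ⟨k0, hk0, hk0min⟩ := t.exists_min_image f ht
    calc ∑ j ∈ s, f j ≤ s.card • f k0 :=
          Finset.sum_le_card_nsmul s f (f k0) (fun j hj => h j hj k0 hk0)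
      _ = t.card • f k0 := by rw [hcard]
      _ ≤ ∑ k ∈ t, f k := Finset.card_nsmul_le_sum t f (f k0) (fun k hk => hk0min k hk)

/-- Auxiliary: the hitting times of node `i` are nonnegative. -/
lemma tau_nonneg
    (β : ℝ) (hβ : β ∈ Set.Ioo (0 : ℝ) 1)
    (η : V → ℝ) (hη0 : ∀ v, 0 ≤ η v) (hη1 : ∑ v, η v = 1)
    (d : V → ℕ) (hd1 : ∀ j, 1 ≤ d j)
    (x : V → Finset V) (hx : ValidConf d x) (i : V)
    (τ : V → ℝ) (hτ0 : τ i = 0)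
    (hτ : ∀ j, j ≠ i → τ j = 1 + (1 - β) * (∑ k, η k * τ k)
        + (β / (d j : ℝ)) * ∑ k ∈ x j, τ k) :
    ∀ v, 0 ≤ τ v := by
  obtain ⟨j0, -, hmin⟩ := Finset.exists_min_image Finset.univ τ ⟨i, Finset.mem_univ i⟩
  by_cases hj0 : j0 = i
  · intro v
    have := hmin v (Finset.mem_univ v)
    rw [hj0, hτ0] at this
    exact this
  · exfalso
    have hβ0 : (0:ℝ) < β := hβ.1
    have hβ1 : β < 1 := hβ.2
    have hdj : (0:ℝ) < (d j0 : ℝ) := by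
      exact_mod_cast Nat.lt_of_lt_of_le Nat.zero_lt_one (hd1 j0)
    have hS : τ j0 ≤ ∑ k, η k * τ k := by
      calc τ j0 = ∑ k, η k * τ j0 := by rw [← Finset.sum_mul, hη1, one_mul]
        _ ≤ ∑ k, η k * τ k :=
          Finset.sum_le_sum fun k _ =>
            mul_le_mul_of_nonneg_left (hmin k (Finset.mem_univ k)) (hη0 k)
    have hXsum : (d j0 : ℝ) * τ j0 ≤ ∑ k ∈ x j0, τ k := by
      have := Finset.card_nsmul_le_sum (x j0) τ (τ j0) (fun k _ => hmin k (Finset.mem_univ k))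
      rw [nsmul_eq_mul, (hx j0).2] at this
      exact this
    have heq := hτ j0 hj0
    have h1 : β * τ j0 ≤ (β / (d j0 : ℝ)) * ∑ k ∈ x j0, τ k := by
      have hβd : (0:ℝ) ≤ β / (d j0 : ℝ) := by positivity
      calc β * τ j0 = (β / (d j0 : ℝ)) * ((d j0 : ℝ) * τ j0) := by
            field_simp
        _ ≤ (β / (d j0 : ℝ)) * ∑ k ∈ x j0, τ k :=
            mul_le_mul_of_nonneg_left hXsum hβd
    have h2 : (1 - β) * τ j0 ≤ (1 - β) * ∑ k, η k * τ k :=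
      mul_le_mul_of_nonneg_left hS (by linarith)
    linarith

/-- Auxiliary (Kac's formula, algebraically): the PageRank of `i` in the configuration
where `i` plays `b` times the expected return time to `i` equals `1`. -/
lemma pagerank_mul_kac
    (β : ℝ) (hβ : β ∈ Set.Ioo (0 : ℝ) 1)
    (η : V → ℝ) (hη1 : ∑ v, η v = 1)
    (d : V → ℕ) (hd1 : ∀ j, 1 ≤ d j)
    (x : V → Finset V) (hx : ValidConf d x) (i : V)
    (τ : V → ℝ) (hτ0 : τ i = 0)
    (hτ : ∀ j, j ≠ i → τ j = 1 + (1 - β) * (∑ k, η k * τ k)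
        + (β / (d j : ℝ)) * ∑ k ∈ x j, τ k)
    (b : Finset V) (hib : i ∉ b) (hbc : b.card = d i) :
    pagerank β η (update x i b) i *
      (1 + (1 - β) * (∑ k, η k * τ k) + (β / (d i : ℝ)) * ∑ j ∈ b, τ j) = 1 := by
  have hβ0 : (0:ℝ) < β := hβ.1
  have hβ1 : β < 1 := hβ.2
  set y : V → Finset V := update x i b with hy
  have hyv : ∀ j, j ∉ y j ∧ (y j).card = d j := by
    intro j
    by_cases hj : j = i
    · subst hj; simp [hy, hib, hbc]
    · simp only [hy, update_of_ne hj]; exact hx j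
  have hycard : ∀ j, ((y j).card : ℝ) ≠ 0 := by
    intro j
    have : 1 ≤ (y j).card := (hyv j).2 ▸ hd1 j
    exact Nat.cast_ne_zero.mpr (by omega)
  set R : Matrix V V ℝ :=
    Matrix.of fun j k : V => if k ∈ y j then ((y j).card : ℝ)⁻¹ else 0 with hR
  have hRnn : ∀ j k, 0 ≤ R j k := by
    intro j k
    simp only [hR, Matrix.of_apply]
    split <;> positivity
  have hRrow : ∀ j, ∑ k, R j k = 1 := by
    intro j
    simp only [hR, Matrix.of_apply]
    rw [Finset.sum_ite_mem, Finset.univ_inter, Finset.sum_const, nsmul_eq_mul,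
      mul_inv_cancel₀ (hycard j)]
  have hRdiag : ∀ j, R j j = 0 := by
    intro j
    simp only [hR, Matrix.of_apply, if_neg (hyv j).1]
  set A : Matrix V V ℝ := (1 : Matrix V V ℝ) - β • Rᵀ with hA
  have hdet : A.det ≠ 0 := by
    apply det_ne_zero_of_sum_col_lt_diag
    intro k
    have h1 : A k k = 1 := by
      simp [hA, Matrix.sub_apply, Matrix.smul_apply, Matrix.one_apply,
        Matrix.transpose_apply, hRdiag k]
    have h2 : ∑ v ∈ Finset.univ.erase k, ‖A v k‖ = β := by
      have : ∀ v ∈ Finset.univ.erase k, ‖A v k‖ = β * R k v := by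
        intro v hv
        have hvk : v ≠ k := Finset.ne_of_mem_erase hv
        simp only [hA, Matrix.sub_apply, Matrix.smul_apply, Matrix.one_apply,
          Matrix.transpose_apply, if_neg hvk, smul_eq_mul, zero_sub, norm_neg]
        rw [Real.norm_eq_abs, abs_of_nonneg (mul_nonneg hβ0.le (hRnn k v))]
      rw [Finset.sum_congr rfl this, ← Finset.mul_sum]
      have : ∑ v ∈ Finset.univ.erase k, R k v = 1 := by
        rw [Finset.sum_erase_eq_sub (Finset.mem_univ k), hRrow k, hRdiag k, sub_zero]
      rw [this, mul_one]
    rw [h1, h2]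
    simpa using hβ1
  set π : V → ℝ := pagerank β η y with hπdef
  have hπ : A.mulVec π = (1 - β) • η := by
    have : π = (1 - β) • (A⁻¹.mulVec η) := rfl
    rw [this, Matrix.mulVec_smul, Matrix.mulVec_mulVec, Matrix.mul_nonsing_inv A (isUnit_iff_ne_zero.mpr hdet),
      Matrix.one_mulVec]
  have hE1 : ∀ v, π v = (1 - β) * η v + β * ∑ j, R j v * π j := by
    intro v
    have h := congrFun hπ v
    simp only [hA, Matrix.sub_mulVec, Matrix.smul_mulVec, Matrix.one_mulVec,
      Pi.sub_apply, Pi.smul_apply, smul_eq_mul] at h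
    have hmv : Rᵀ.mulVec π v = ∑ j, R j v * π j := by
      simp [Matrix.mulVec, dotProduct, Matrix.transpose_apply]
    rw [hmv] at h
    linarith
  have hsum : ∑ v, π v = 1 := by
    have hmid : ∑ v, ∑ j, R j v * π j = ∑ j, π j := by
      rw [Finset.sum_comm]
      refine Finset.sum_congr rfl fun j _ => ?_
      rw [← Finset.sum_mul, hRrow j, one_mul]
    have h : ∑ v, π v = (1 - β) + β * ∑ v, π v := by
      calc ∑ v, π v = ∑ v, ((1 - β) * η v + β * ∑ j, R j v * π j) :=
            Finset.sum_congr rfl fun v _ => hE1 v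
        _ = (1 - β) * ∑ v, η v + β * ∑ v, ∑ j, R j v * π j := by
            rw [Finset.sum_add_distrib, ← Finset.mul_sum, ← Finset.mul_sum]
        _ = (1 - β) + β * ∑ v, π v := by rw [hη1, mul_one, hmid]
    have hne : (1:ℝ) - β ≠ 0 := by linarith
    exact mul_left_cancel₀ hne (by linarith : (1 - β) * ∑ v, π v = (1 - β) * 1)
  set S : ℝ := ∑ k, η k * τ k with hS
  set m : V → ℝ := fun v => 1 + (1 - β) * S + β * ∑ k, R v k * τ k with hm
  have hmsum : ∀ v, ∑ k, R v k * τ k = ((y v).card : ℝ)⁻¹ * ∑ k ∈ y v, τ k := by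
    intro v
    simp only [hR, Matrix.of_apply, ite_mul, zero_mul]
    rw [Finset.sum_ite_mem, Finset.univ_inter, Finset.mul_sum]
  have hmτ : ∀ v, v ≠ i → m v = τ v := by
    intro v hv
    rw [hτ v hv, hm]
    simp only
    rw [hmsum v]
    have hyx : y v = x v := update_of_ne hv _ _
    rw [hyx]
    have : ((x v).card : ℝ) = (d v : ℝ) := by exact_mod_cast congrArg Nat.cast (hx v).2
    rw [this, div_eq_mul_inv, mul_assoc]
  have hmi : m i = 1 + (1 - β) * S + (β / (d i : ℝ)) * ∑ j ∈ b, τ j := by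
    rw [hm]
    simp only
    rw [hmsum i]
    have hyi : y i = b := update_self i b x
    rw [hyi, hbc, div_eq_mul_inv, mul_assoc]
  -- Kac computation
  have hkey : ∑ v, π v * m v = 1 + ∑ v, π v * τ v := by
    calc ∑ v, π v * m v
        = ∑ v, (π v * (1 + (1 - β) * S) + ∑ k, β * R v k * π v * τ k) := by
          refine Finset.sum_congr rfl fun v _ => ?_
          have h' : β * (π v * ∑ k, R v k * τ k) = ∑ k, β * R v k * π v * τ k := by
            rw [Finset.mul_sum, Finset.mul_sum]
            exact Finset.sum_congr rfl fun k _ => by ring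
          simp only [hm]
          linear_combination h'
      _ = (1 + (1 - β) * S) * ∑ v, π v + ∑ k, (∑ v, β * R v k * π v) * τ k := by
          rw [Finset.sum_add_distrib, Finset.sum_comm]
          congr 1
          · rw [← Finset.sum_mul, mul_comm]
          · exact Finset.sum_congr rfl fun k _ => by rw [Finset.sum_mul]
      _ = (1 + (1 - β) * S) + ∑ k, (π k - (1 - β) * η k) * τ k := by
          rw [hsum, mul_one]
          congr 1
          refine Finset.sum_congr rfl fun k _ => ?_
          have h1 : ∑ v, β * R v k * π v = β * ∑ v, R v k * π v := by
            rw [Finset.mul_sum]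
            exact Finset.sum_congr rfl fun v _ => by ring
          have h2 : ∑ v, β * R v k * π v = π k - (1 - β) * η k := by
            rw [h1]
            have := hE1 k
            linarith
          rw [h2]
      _ = 1 + ∑ v, π v * τ v := by
          have : ∑ k, (π k - (1 - β) * η k) * τ k
              = ∑ k, π k * τ k - (1 - β) * S := by
            rw [hS, Finset.mul_sum, ← Finset.sum_sub_distrib]
            exact Finset.sum_congr rfl fun k _ => by ring
          rw [this]
          ring
  have hsplit : ∑ v, π v * m v = ∑ v, π v * τ v + π i * m i := by
    have h1 : ∑ v, π v * m v = π i * m i + ∑ v ∈ Finset.univ.erase i, π v * m v := by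
      rw [← Finset.add_sum_erase Finset.univ _ (Finset.mem_univ i)]
    have h2 : ∑ v ∈ Finset.univ.erase i, π v * m v
        = ∑ v ∈ Finset.univ.erase i, π v * τ v := by
      refine Finset.sum_congr rfl fun v hv => ?_
      rw [hmτ v (Finset.ne_of_mem_erase hv)]
    have h3 : ∑ v, π v * τ v = π i * τ i + ∑ v ∈ Finset.univ.erase i, π v * τ v := by
      rw [← Finset.add_sum_erase Finset.univ _ (Finset.mem_univ i)]
    rw [h1, h2, h3, hτ0]
    ring
  have : π i * m i = 1 := by
    rw [hsplit] at hkey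
    linarith
  rw [hmi] at this
  exact this

/-- Best response characterization in the centrality game: given the hitting times
`τ` of node `i` determined by the other players' wiring, an admissible action `a`
is a best response for `i` iff every node outside `a` (other than `i`) has hitting
time at least `max_{j∈a} τ j`; equivalently, iff `a` minimizes `∑_{j∈a} τ j` over
admissible actions. -/
theorem best_response_iff_hitting_times
    (β : ℝ) (hβ : β ∈ Set.Ioo (0 : ℝ) 1)
    (η : V → ℝ) (hη0 : ∀ v, 0 ≤ η v) (hη1 : ∑ v, η v = 1)
    (d : V → ℕ) (hd : ∀ i, 1 ≤ d i ∧ d i ≤ Fintype.card V - 1)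
    (x : V → Finset V) (hx : ValidConf d x) (i : V)
    (τ : V → ℝ)
    (hτ0 : τ i = 0)
    (hτ : ∀ j, j ≠ i → τ j = 1 + (1 - β) * (∑ k, η k * τ k)
        + (β / (d j : ℝ)) * ∑ k ∈ x j, τ k) :
    ∀ a : Finset V, i ∉ a → a.card = d i →
      ((∀ b : Finset V, i ∉ b → b.card = d i →
          pagerank β η (update x i b) i ≤ pagerank β η (update x i a) i) ↔
        (∀ k, k ∉ a → k ≠ i → ∀ j ∈ a, τ j ≤ τ k)) ∧
      ((∀ b : Finset V, i ∉ b → b.card = d i →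
          pagerank β η (update x i b) i ≤ pagerank β η (update x i a) i) ↔
        (∀ b : Finset V, i ∉ b → b.card = d i → ∑ j ∈ a, τ j ≤ ∑ j ∈ b, τ j)) := by
  intro a hia hac
  have hd1 : ∀ j, 1 ≤ d j := fun j => (hd j).1
  have hτnn : ∀ v, 0 ≤ τ v := tau_nonneg β hβ η hη0 hη1 d hd1 x hx i τ hτ0 hτ
  have hβ0 : (0:ℝ) < β := hβ.1
  have hβ1 : β < 1 := hβ.2
  have hdi : (0:ℝ) < (d i : ℝ) := by
    exact_mod_cast Nat.lt_of_lt_of_le Nat.zero_lt_one (hd1 i)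
  set S : ℝ := ∑ k, η k * τ k with hS
  have hSnn : 0 ≤ S := Finset.sum_nonneg fun k _ => mul_nonneg (hη0 k) (hτnn k)
  set M : Finset V → ℝ := fun c => 1 + (1 - β) * S + (β / (d i : ℝ)) * ∑ j ∈ c, τ j with hM
  have hMpos : ∀ c : Finset V, 0 < M c := by
    intro c
    have h1 : 0 ≤ (β / (d i : ℝ)) * ∑ j ∈ c, τ j := by
      apply mul_nonneg (by positivity)
      exact Finset.sum_nonneg fun j _ => hτnn j
    have h2 : 0 ≤ (1 - β) * S := mul_nonneg (by linarith) hSnn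
    simp only [hM]
    linarith
  have hpr : ∀ c : Finset V, i ∉ c → c.card = d i →
      pagerank β η (update x i c) i = (M c)⁻¹ := by
    intro c hic hcc
    have hkac := pagerank_mul_kac β hβ η hη1 d hd1 x hx i τ hτ0 hτ c hic hcc
    have hMne : M c ≠ 0 := (hMpos c).ne'
    calc pagerank β η (update x i c) i
        = pagerank β η (update x i c) i * M c * (M c)⁻¹ := by
          rw [mul_assoc, mul_inv_cancel₀ hMne, mul_one]
      _ = (M c)⁻¹ := by
          rw [show pagerank β η (update x i c) i * M c = 1 from hkac, one_mul]
  -- best response ↔ minimizes the sum of hitting times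
  have hiff2 : (∀ b : Finset V, i ∉ b → b.card = d i →
      pagerank β η (update x i b) i ≤ pagerank β η (update x i a) i) ↔
      (∀ b : Finset V, i ∉ b → b.card = d i → ∑ j ∈ a, τ j ≤ ∑ j ∈ b, τ j) := by
    constructor
    · intro h b hib hbc
      have h1 := h b hib hbc
      rw [hpr b hib hbc, hpr a hia hac] at h1
      have h2 : M a ≤ M b :=
        (inv_le_inv₀ (hMpos b) (hMpos a)).mp h1
      simp only [hM] at h2
      have hq : (0:ℝ) < β / (d i : ℝ) := by positivity
      have h3 : (β / (d i : ℝ)) * ∑ j ∈ a, τ j ≤ (β / (d i : ℝ)) * ∑ j ∈ b, τ j := by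
        linarith
      exact le_of_mul_le_mul_left h3 hq
    · intro h b hib hbc
      have h2 : M a ≤ M b := by
        have := h b hib hbc
        simp only [hM]
        have h3 := mul_le_mul_of_nonneg_left this (by positivity : (0:ℝ) ≤ β / (d i : ℝ))
        linarith
      rw [hpr b hib hbc, hpr a hia hac]
      exact (inv_le_inv₀ (hMpos b) (hMpos a)).mpr h2
  -- sum minimization ↔ pointwise condition
  have hiff1 : (∀ b : Finset V, i ∉ b → b.card = d i → ∑ j ∈ a, τ j ≤ ∑ j ∈ b, τ j) ↔
      (∀ k, k ∉ a → k ≠ i → ∀ j ∈ a, τ j ≤ τ k) := by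
    constructor
    · intro h k hka hki j hja
      set b : Finset V := insert k (a.erase j) with hb
      have hkaj : k ∉ a.erase j := fun hk => hka (Finset.mem_of_mem_erase hk)
      have hib : i ∉ b := by
        simp only [hb, Finset.mem_insert]
        push_neg
        exact ⟨fun h' => hki h'.symm, fun h' => hia (Finset.mem_of_mem_erase h')⟩
      have hbc : b.card = d i := by
        rw [hb, Finset.card_insert_of_notMem hkaj, Finset.card_erase_of_mem hja, ← hac]
        have : 1 ≤ a.card := Finset.card_pos.mpr ⟨j, hja⟩
        omega
      have hsb : ∑ v ∈ b, τ v = τ k + (∑ v ∈ a, τ v - τ j) := by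
        rw [hb, Finset.sum_insert hkaj, Finset.sum_erase_eq_sub hja]
      have := h b hib hbc
      rw [hsb] at this
      linarith
    · intro h b hib hbc
      have hcard : (a \ b).card = (b \ a).card :=
        Finset.card_sdiff_comm (by rw [hac, hbc])
      have hle : ∑ v ∈ a \ b, τ v ≤ ∑ v ∈ b \ a, τ v := by
        apply sum_le_sum_of_card_eq τ hcard
        intro j hj k hk
        have hja : j ∈ a := (Finset.mem_sdiff.mp hj).1
        have hka : k ∉ a := (Finset.mem_sdiff.mp hk).2
        have hkb : k ∈ b := (Finset.mem_sdiff.mp hk).1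
        have hki : k ≠ i := fun h' => hib (h' ▸ hkb)
        exact h k hka hki j hja
      have ha' : ∑ v ∈ a ∩ b, τ v + ∑ v ∈ a \ b, τ v = ∑ v ∈ a, τ v :=
        Finset.sum_inter_add_sum_sdiff a b τ
      have hb' : ∑ v ∈ b ∩ a, τ v + ∑ v ∈ b \ a, τ v = ∑ v ∈ b, τ v :=
        Finset.sum_inter_add_sum_sdiff b a τ
      rw [Finset.inter_comm] at hb'
      linarith
  exact ⟨hiff2.trans hiff1, hiff2⟩
end

section
/- Let G = (V,E) be a directed graph with no sinks, β ∈ (0,1), and consider the hitting times τ_j^i for the chain P = βR + (1-β)𝟙η^T. Then for every node h not in the set N_i^{-∞} of nodes from which i is reachable, and every k ∈ N_i^{-∞}, one has τ_h^i = 1/(1-β) · (1 + (1-β)τ_η^i) and τ_h^i > τ_k^i. In particular all nodes outside N_i^{-∞} have equal hitting time to i, strictly larger than that of any node from which i is reachable. -/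
open Finset

variable {V : Type*} [Fintype V] [DecidableEq V]

/-- Nodes from which `i` is not reachable all have the same expected hitting time
`(1/(1-β)) (1 + (1-β) τ_η^i)`, strictly larger than the hitting time of any node
from which `i` is reachable. -/
theorem hitting_time_outside_reach (N : V → Finset V)
    (hloop : ∀ v, v ∉ N v) (hsink : ∀ v, (N v).Nonempty)
    (β : ℝ) (hβ : β ∈ Set.Ioo (0 : ℝ) 1)
    (η : V → ℝ) (hη0 : ∀ v, 0 ≤ η v) (hη1 : ∑ v, η v = 1) (i : V)
    (τ : V → ℝ) (hτ : HittingSystem N β η i τ) :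
    ∀ h k : V, ¬ Reach N h i → Reach N k i →
      τ h = (1 / (1 - β)) * (1 + (1 - β) * ∑ j, η j * τ j) ∧ τ k < τ h := by
  classical
  obtain ⟨hτi, hτeq⟩ := hτ
  obtain ⟨hβ0, hβ1⟩ := hβ
  intro h k hh hk
  have h1β : (0:ℝ) < 1 - β := by linarith
  set τη : ℝ := ∑ j, η j * τ j with hτηdef
  set c : ℝ := (1 / (1 - β)) * (1 + (1 - β) * τη) with hcdef
  have hcM : (1 - β) * c = 1 + (1 - β) * τη := by
    rw [hcdef]; field_simp
  -- lower bound lemma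
  have key_lower : ∀ j, j ≠ i → ∀ μ : ℝ, (∀ a ∈ N j, μ ≤ τ a) →
      1 + (1 - β) * τη + β * μ ≤ τ j := by
    intro j hj μ hμ
    have hd : (0:ℝ) < ((N j).card : ℝ) := by
      exact_mod_cast Finset.card_pos.mpr (hsink j)
    have hsum : ((N j).card : ℝ) * μ ≤ ∑ a ∈ N j, τ a := by
      calc ((N j).card : ℝ) * μ = ∑ _a ∈ N j, μ := by simp [mul_comm]
        _ ≤ ∑ a ∈ N j, τ a := Finset.sum_le_sum hμ
    have hmul : β / ((N j).card:ℝ) * (((N j).card:ℝ) * μ)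
        ≤ β / ((N j).card:ℝ) * ∑ a ∈ N j, τ a :=
      mul_le_mul_of_nonneg_left hsum (by positivity)
    have heq : β / ((N j).card:ℝ) * (((N j).card:ℝ) * μ) = β * μ := by
      field_simp
    rw [hτeq j hj]
    linarith [heq ▸ hmul]
  have key_upper : ∀ j, j ≠ i → ∀ m : ℝ, (∀ a ∈ N j, τ a ≤ m) →
      τ j ≤ 1 + (1 - β) * τη + β * m := by
    intro j hj m hm
    have hd : (0:ℝ) < ((N j).card : ℝ) := by
      exact_mod_cast Finset.card_pos.mpr (hsink j)
    have hsum : ∑ a ∈ N j, τ a ≤ ((N j).card : ℝ) * m := by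
      calc ∑ a ∈ N j, τ a ≤ ∑ _a ∈ N j, m := Finset.sum_le_sum hm
        _ = ((N j).card : ℝ) * m := by simp [mul_comm]
    have hmul : β / ((N j).card:ℝ) * ∑ a ∈ N j, τ a
        ≤ β / ((N j).card:ℝ) * (((N j).card:ℝ) * m) :=
      mul_le_mul_of_nonneg_left hsum (by positivity)
    have heq : β / ((N j).card:ℝ) * (((N j).card:ℝ) * m) = β * m := by
      field_simp
    rw [hτeq j hj]
    linarith [heq ▸ hmul]
  -- min over all vertices
  have hVne : (Finset.univ : Finset V).Nonempty := ⟨h, Finset.mem_univ h⟩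
  obtain ⟨j₀, -, hj₀min⟩ := Finset.exists_min_image Finset.univ τ hVne
  have hmin : ∀ v, τ j₀ ≤ τ v := fun v => hj₀min v (Finset.mem_univ v)
  -- c > 0
  have hc0 : 0 < c := by
    by_contra hcle
    push_neg at hcle
    have hμc : c ≤ τ j₀ := by
      by_cases hj : j₀ = i
      · rw [hj, hτi]; exact hcle
      · have := key_lower j₀ hj (τ j₀) (fun a _ => hmin a)
        nlinarith [hcM]
    have hτηc : c ≤ τη := by
      rw [hτηdef]
      calc c = ∑ v, η v * c := by rw [← Finset.sum_mul, hη1, one_mul]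
        _ ≤ ∑ v, η v * τ v := by
            apply Finset.sum_le_sum
            intro v _
            exact mul_le_mul_of_nonneg_left (le_trans hμc (hmin v)) (hη0 v)
    nlinarith [hcM]
  -- min ≥ 0, so all τ ≥ 0
  have hτ0 : ∀ v, 0 ≤ τ v := by
    intro v
    refine le_trans ?_ (hmin v)
    by_cases hj : j₀ = i
    · rw [hj, hτi]
    · have := key_lower j₀ hj (τ j₀) (fun a _ => hmin a)
      nlinarith [hcM]
  -- all τ ≤ c
  obtain ⟨j₁, -, hj₁max⟩ := Finset.exists_max_image Finset.univ τ hVne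
  have hmax : ∀ v, τ v ≤ τ j₁ := fun v => hj₁max v (Finset.mem_univ v)
  have hτc : ∀ v, τ v ≤ c := by
    intro v
    refine le_trans (hmax v) ?_
    by_cases hj : j₁ = i
    · rw [hj, hτi]; exact le_of_lt hc0
    · have := key_upper j₁ hj (τ j₁) (fun a _ => hmax a)
      nlinarith [hcM]
  -- on the non-reaching set, τ = c
  have hS : ∀ v, ¬ Reach N v i → τ v = c := by
    set S : Finset V := Finset.univ.filter (fun v => ¬ Reach N v i) with hSdef
    have hSne : S.Nonempty := ⟨h, by simp [hSdef, hh]⟩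
    obtain ⟨j₂, hj₂S, hj₂min⟩ := Finset.exists_min_image S τ hSne
    have hj₂nr : ¬ Reach N j₂ i := by
      have := hj₂S; simp [hSdef] at this; exact this
    have hj₂i : j₂ ≠ i := fun he => hj₂nr (he ▸ Relation.ReflTransGen.refl)
    have hnb : ∀ a ∈ N j₂, τ j₂ ≤ τ a := by
      intro a ha
      apply hj₂min
      simp only [hSdef, Finset.mem_filter, Finset.mem_univ, true_and]
      intro hra
      exact hj₂nr (Relation.ReflTransGen.head ha hra)
    have hlow := key_lower j₂ hj₂i (τ j₂) hnb
    have hj₂c : c ≤ τ j₂ := by nlinarith [hcM]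
    intro v hv
    have hvS : v ∈ S := by simp [hSdef, hv]
    exact le_antisymm (hτc v) (le_trans hj₂c (hj₂min v hvS))
  -- strict bound for reaching vertices
  have hstrict : ∀ v, Reach N v i → τ v < c := by
    intro v hv
    unfold Reach at hv
    induction hv using Relation.ReflTransGen.head_induction_on with
    | refl => rw [hτi]; exact hc0
    | head hab _ ih =>
      rename_i a b _
      by_cases hai : a = i
      · rw [hai, hτi]; exact hc0
      · have hd : (0:ℝ) < ((N a).card : ℝ) := by
          exact_mod_cast Finset.card_pos.mpr (hsink a)
        have hsum : ∑ x ∈ N a, τ x < ((N a).card : ℝ) * c := by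
          calc ∑ x ∈ N a, τ x < ∑ _x ∈ N a, c :=
                Finset.sum_lt_sum (fun x _ => hτc x) ⟨b, hab, ih⟩
            _ = ((N a).card : ℝ) * c := by simp [mul_comm]
        have hmul : β / ((N a).card:ℝ) * ∑ x ∈ N a, τ x
            < β / ((N a).card:ℝ) * (((N a).card:ℝ) * c) := by
          apply mul_lt_mul_of_pos_left hsum (by positivity)
        have heq : β / ((N a).card:ℝ) * (((N a).card:ℝ) * c) = β * c := by
          field_simp
        rw [hτeq a hai]
        nlinarith [heq ▸ hmul, hcM]
  exact ⟨hS h hh, (hstrict k hk).trans_eq (hS h hh).symm⟩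
end

section
/- Let G = (V,E) be a directed graph with no sinks and let τ_j^i be the hitting times for the chain P = βR + (1-β)𝟙η^T. If k ∈ N_i^{-∞}∖{i} and C ⊆ V∖{k,i} is a cut-set between k and i (every directed path from k to i passes through C), then τ_k^i > min_{j∈C} τ_j^i. -/
open Finset

variable {V : Type*} [Fintype V] [DecidableEq V]

/-- If all out-neighbours of `j` have `τ ≥ c`, then the recursion gives a lower bound. -/
lemma step_lower (N : V → Finset V) (hsink : ∀ v, (N v).Nonempty)
    {β W : ℝ} (hβ0 : 0 < β) (τ : V → ℝ) (j : V)
    (hj : τ j = 1 + (1 - β) * W + (β / ((N j).card : ℝ)) * ∑ l ∈ N j, τ l)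
    {c : ℝ} (hc : ∀ l ∈ N j, c ≤ τ l) :
    1 + (1 - β) * W + β * c ≤ τ j := by
  have hd : (0 : ℝ) < ((N j).card : ℝ) := by
    exact_mod_cast Finset.card_pos.mpr (hsink j)
  have hS : ((N j).card : ℝ) * c ≤ ∑ l ∈ N j, τ l := by
    have := Finset.card_nsmul_le_sum (N j) τ c hc
    simpa [nsmul_eq_mul] using this
  have hkey : β * c ≤ β / ((N j).card : ℝ) * ∑ l ∈ N j, τ l := by
    rw [div_mul_eq_mul_div, le_div_iff₀ hd]
    nlinarith
  linarith [hj.ge, hkey]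

/-- If all out-neighbours of `j` have `τ ≤ c`, then the recursion gives an upper bound. -/
lemma step_upper (N : V → Finset V) (hsink : ∀ v, (N v).Nonempty)
    {β W : ℝ} (hβ0 : 0 < β) (τ : V → ℝ) (j : V)
    (hj : τ j = 1 + (1 - β) * W + (β / ((N j).card : ℝ)) * ∑ l ∈ N j, τ l)
    {c : ℝ} (hc : ∀ l ∈ N j, τ l ≤ c) :
    τ j ≤ 1 + (1 - β) * W + β * c := by
  have hd : (0 : ℝ) < ((N j).card : ℝ) := by
    exact_mod_cast Finset.card_pos.mpr (hsink j)
  have hS : (∑ l ∈ N j, τ l) ≤ ((N j).card : ℝ) * c := by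
    have := Finset.sum_le_card_nsmul (N j) τ c hc
    simpa [nsmul_eq_mul] using this
  have hkey : β / ((N j).card : ℝ) * ∑ l ∈ N j, τ l ≤ β * c := by
    rw [div_mul_eq_mul_div, div_le_iff₀ hd]
    nlinarith
  linarith [hj.le, hkey]

/-- Cut-set inequality for hitting times: if every directed path from `k` to `i`
passes through the cut-set `C ⊆ V∖{k,i}`, then `τ_k > min_{j∈C} τ_j`. -/
theorem hitting_time_cutset (N : V → Finset V)
    (hloop : ∀ v, v ∉ N v) (hsink : ∀ v, (N v).Nonempty)
    (β : ℝ) (hβ : β ∈ Set.Ioo (0 : ℝ) 1)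
    (η : V → ℝ) (hη0 : ∀ v, 0 ≤ η v) (hη1 : ∑ v, η v = 1) (i : V)
    (τ : V → ℝ) (hτ : HittingSystem N β η i τ)
    (k : V) (hk : k ≠ i) (hreach : Reach N k i)
    (C : Finset V) (hCi : i ∉ C) (hCk : k ∉ C)
    (hcut : ¬ Relation.ReflTransGen (fun a b => b ∈ N a ∧ b ∉ C) k i) :
    ∃ j ∈ C, τ j < τ k := by
  classical
  obtain ⟨hβ0, hβ1⟩ := hβ
  obtain ⟨hτi, hrec⟩ := hτ
  set W : ℝ := ∑ v, η v * τ v with hW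
  have h1β : (0 : ℝ) < 1 - β := by linarith
  -- Step 1 : τ is nonnegative
  have hτ0 : ∀ v, 0 ≤ τ v := by
    obtain ⟨m, -, hm⟩ := Finset.exists_min_image univ τ ⟨i, mem_univ i⟩
    have hm' : ∀ v, τ m ≤ τ v := fun v => hm v (mem_univ v)
    rcases eq_or_ne m i with rfl | hmi
    · intro v; rw [← hτi]; exact hm' v
    · exfalso
      have hWm : τ m ≤ W := by
        calc τ m = ∑ v, η v * τ m := by rw [← Finset.sum_mul, hη1, one_mul]
        _ ≤ ∑ v, η v * τ v :=
          Finset.sum_le_sum fun v _ => mul_le_mul_of_nonneg_left (hm' v) (hη0 v)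
      have := step_lower N hsink hβ0 τ m (hrec m hmi) (fun l _ => hm' l)
      nlinarith
  have hW0 : 0 ≤ W := Finset.sum_nonneg fun v _ => mul_nonneg (hη0 v) (hτ0 v)
  set M : ℝ := 1 / (1 - β) + W with hM
  have hMeq : (1 - β) * M = 1 + (1 - β) * W := by
    rw [hM, mul_add, mul_one_div_cancel h1β.ne']
  clear_value W M
  have hMpos : 0 < M := by
    have : (0:ℝ) < 1 / (1 - β) := by positivity
    linarith
  -- Step 2 : τ is bounded above by M
  have hub : ∀ v, τ v ≤ M := by
    obtain ⟨m, -, hm⟩ := Finset.exists_max_image univ τ ⟨i, mem_univ i⟩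
    have hm' : ∀ v, τ v ≤ τ m := fun v => hm v (mem_univ v)
    rcases eq_or_ne m i with rfl | hmi
    · intro v; exact le_trans (hm' v) (by rw [hτi]; exact hMpos.le)
    · intro v
      refine le_trans (hm' v) ?_
      have := step_upper N hsink hβ0 τ m (hrec m hmi) (fun l _ => hm' l)
      have h2 : (1 - β) * τ m ≤ (1 - β) * M := by nlinarith
      exact le_of_mul_le_mul_left h2 h1β
  -- Step 3 : if τ v ≥ M at v ≠ i, then all out-neighbours also satisfy τ ≥ M
  have hprop : ∀ v, v ≠ i → M ≤ τ v → ∀ l ∈ N v, M ≤ τ l := by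
    intro v hvi hvM
    by_contra h
    push_neg at h
    obtain ⟨l0, hl0, hl0M⟩ := h
    have hd : (0 : ℝ) < ((N v).card : ℝ) := by
      exact_mod_cast Finset.card_pos.mpr (hsink v)
    have hS : (∑ l ∈ N v, τ l) < ((N v).card : ℝ) * M := by
      have := Finset.sum_lt_sum (s := N v) (f := τ) (g := fun _ => M)
        (fun l _ => hub l) ⟨l0, hl0, hl0M⟩
      simpa [Finset.sum_const, nsmul_eq_mul, mul_comm] using this
    have hkey : β / ((N v).card : ℝ) * ∑ l ∈ N v, τ l < β * M := by
      rw [div_mul_eq_mul_div, div_lt_iff₀ hd]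
      nlinarith
    have hrv := hrec v hvi
    have : τ v < M := by nlinarith
    linarith
  -- Step 4 : by contradiction, assume τ j ≥ τ k for all j ∈ C
  by_contra hcon
  push_neg at hcon
  -- the set of vertices reachable from k avoiding C
  set A : Finset V :=
    univ.filter (fun v => Relation.ReflTransGen (fun a b => b ∈ N a ∧ b ∉ C) k v) with hA
  have hkA : k ∈ A := by
    simp only [hA, mem_filter, mem_univ, true_and]
    exact Relation.ReflTransGen.refl
  obtain ⟨m, hmA, hm⟩ := Finset.exists_min_image A τ ⟨k, hkA⟩
  have hmReach : Relation.ReflTransGen (fun a b => b ∈ N a ∧ b ∉ C) k m := by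
    simpa [hA] using hmA
  have hmi : m ≠ i := by
    rintro rfl; exact hcut hmReach
  have hmk : τ m ≤ τ k := hm k hkA
  -- all out-neighbours of m satisfy τ ≥ τ m
  have hnb : ∀ l ∈ N m, τ m ≤ τ l := by
    intro l hl
    by_cases hlC : l ∈ C
    · exact le_trans hmk (hcon l hlC)
    · have : l ∈ A := by
        simp only [hA, mem_filter, mem_univ, true_and]
        exact hmReach.tail ⟨hl, hlC⟩
      exact hm l this
  -- hence τ m ≥ M
  have hmM : M ≤ τ m := by
    have := step_lower N hsink hβ0 τ m (hrec m hmi) hnb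
    have h2 : (1 - β) * M ≤ (1 - β) * τ m := by nlinarith
    exact le_of_mul_le_mul_left h2 h1β
  have hkM : M ≤ τ k := le_trans hmM hmk
  -- Step 5 : propagate τ ≥ M along the path from k to i
  have hpath : ∀ v, Reach N v i → M ≤ τ v → M ≤ τ i := by
    intro v h
    induction h using Relation.ReflTransGen.head_induction_on with
    | refl => exact id
    | @head a c h' h ih =>
      intro hM
      rcases eq_or_ne a i with rfl | hai
      · exact hM
      · exact ih (hprop a hai hM c h')
  have := hpath k hreach hkM
  rw [hτi] at this
  linarith
end

section
/- Let G be a directed graph with no sinks and τ^i the hitting times of node i for the chain P = βR + (1-β)𝟙η^T. If h, j are two nodes distinct from i with deg_h = deg_j and N_j∖{h} = N_h∖{j}, then τ_h^i = τ_j^i. -/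
open Finset

variable {V : Type*} [Fintype V] [DecidableEq V]

/-- Two nodes `h, j ≠ i` with the same out-degree and with
`N_j ∖ {h} = N_h ∖ {j}` have equal expected hitting times of `i`. -/
theorem hitting_time_symmetric (N : V → Finset V)
    (hloop : ∀ v, v ∉ N v) (hsink : ∀ v, (N v).Nonempty)
    (β : ℝ) (hβ : β ∈ Set.Ioo (0 : ℝ) 1)
    (η : V → ℝ) (hη0 : ∀ v, 0 ≤ η v) (hη1 : ∑ v, η v = 1) (i : V)
    (τ : V → ℝ) (hτ : HittingSystem N β η i τ)
    (h j : V) (hhi : h ≠ i) (hji : j ≠ i)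
    (hdeg : (N h).card = (N j).card)
    (hnbr : (N j).erase h = (N h).erase j) :
    τ h = τ j := by
  obtain ⟨-, heq⟩ := hτ
  have eh := heq h hhi
  have ej := heq j hji
  have hc : (0:ℝ) < ((N j).card : ℝ) := by
    exact_mod_cast Finset.card_pos.mpr (hsink j)
  have hdeg' : ((N h).card : ℝ) = ((N j).card : ℝ) := by exact_mod_cast hdeg
  have hiff : j ∈ N h ↔ h ∈ N j := by
    constructor
    · intro hjh
      by_contra hhj
      have h1 : (N j) = (N h).erase j := by rw [← hnbr, Finset.erase_eq_of_notMem hhj]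
      have h2 := congrArg Finset.card h1
      rw [Finset.card_erase_of_mem hjh] at h2
      have h3 := Finset.card_pos.mpr ⟨j, hjh⟩
      omega
    · intro hhj
      by_contra hjh
      have h1 : (N h) = (N j).erase h := by rw [hnbr, Finset.erase_eq_of_notMem hjh]
      have h2 := congrArg Finset.card h1
      rw [Finset.card_erase_of_mem hhj] at h2
      have h3 := Finset.card_pos.mpr ⟨h, hhj⟩
      omega
  by_cases hjh : j ∈ N h
  · have hhj : h ∈ N j := hiff.mp hjh
    have s1 : ∑ k ∈ N h, τ k = τ j + ∑ k ∈ (N h).erase j, τ k :=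
      (Finset.add_sum_erase _ _ hjh).symm
    have s2 : ∑ k ∈ N j, τ k = τ h + ∑ k ∈ (N j).erase h, τ k :=
      (Finset.add_sum_erase _ _ hhj).symm
    have key : τ h - τ j = (β / ((N j).card : ℝ)) * (τ j - τ h) := by
      have e : τ h - τ j
          = (β / ((N j).card : ℝ)) * ((∑ k ∈ N h, τ k) - ∑ k ∈ N j, τ k) := by
        rw [eh, ej, hdeg']; ring
      rw [e, s1, s2, hnbr]; ring
    have hpos : 0 < β / ((N j).card : ℝ) := div_pos hβ.1 hc
    nlinarith [key, hpos]
  · have hhj : h ∉ N j := fun hh => hjh (hiff.mpr hh)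
    have hNN : N j = N h := by
      rw [← Finset.erase_eq_of_notMem hhj, hnbr, Finset.erase_eq_of_notMem hjh]
    rw [eh, ej, hdeg', hNN]
end

section
/- Let x be a Nash equilibrium of a centrality game whose graph G(x) is strongly connected with n nodes, minimum out-degree d_*, c_2 undirected links, and c_3 three-cycles. Then 2c_2 ≥ n and d_* c_3 + 2c_2 ≥ n d_*. -/
open Function Finset Matrix

variable {V : Type*} [Fintype V] [DecidableEq V]

namespace NashPR

attribute [local instance]
  Matrix.linftyOpNormedAddCommGroup Matrix.linftyOpNormedRing Matrix.linftyOpNormedAlgebra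

/-- transition matrix -/
noncomputable def Rmat (E : V → Finset V) : Matrix V V ℝ :=
  Matrix.of fun j k : V => if k ∈ E j then ((E j).card : ℝ)⁻¹ else 0

lemma Rmat_nonneg (E : V → Finset V) (j k : V) : 0 ≤ Rmat E j k := by
  unfold Rmat
  simp only [Matrix.of_apply]
  split <;> positivity

lemma Rmat_norm_le_one (E : V → Finset V) : ‖Rmat E‖ ≤ 1 := by
  rw [Matrix.linfty_opNorm_def]
  have : ((Finset.univ : Finset V).sup fun j : V => ∑ k : V, ‖Rmat E j k‖₊) ≤ 1 := by
    refine Finset.sup_le fun j _ => ?_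
    rw [← NNReal.coe_le_coe]
    push_cast
    have h1 : ∀ k : V, ‖Rmat E j k‖ = if k ∈ E j then ((E j).card : ℝ)⁻¹ else 0 := by
      intro k
      unfold Rmat
      simp only [Matrix.of_apply]
      split
      · rw [Real.norm_eq_abs, abs_of_nonneg (by positivity)]
      · simp
    calc ∑ k : V, ‖Rmat E j k‖ = ∑ k : V, if k ∈ E j then ((E j).card : ℝ)⁻¹ else 0 := by
          exact Finset.sum_congr rfl fun k _ => h1 k
      _ = ∑ k ∈ E j, ((E j).card : ℝ)⁻¹ := by
          rw [Finset.sum_ite_mem, Finset.univ_inter]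
      _ = ((E j).card : ℝ) * ((E j).card : ℝ)⁻¹ := by
          rw [Finset.sum_const, nsmul_eq_mul]
      _ ≤ 1 := by
          rcases Nat.eq_zero_or_pos (E j).card with h | h
          · simp [h]
          · rw [mul_inv_cancel₀ (by positivity)]
  exact_mod_cast this

variable {β : ℝ}

lemma smul_Rmat_norm_lt_one (hβ1 : 0 < β) (hβ2 : β < 1) (E : V → Finset V) :
    ‖β • Rmat E‖ < 1 := by
  rw [norm_smul]
  calc ‖β‖ * ‖Rmat E‖ ≤ ‖β‖ * 1 := by
        exact mul_le_mul_of_nonneg_left (Rmat_norm_le_one E) (norm_nonneg _)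
    _ < 1 := by rw [mul_one, Real.norm_eq_abs, abs_of_pos hβ1]; exact hβ2

/-- `N E = 1 - β R`. -/
noncomputable def Nmat (β : ℝ) (E : V → Finset V) : Matrix V V ℝ :=
  1 - β • Rmat E

lemma isUnit_Nmat (hβ1 : 0 < β) (hβ2 : β < 1) (E : V → Finset V) :
    IsUnit (Nmat β E) :=
  isUnit_one_sub_of_norm_lt_one (smul_Rmat_norm_lt_one hβ1 hβ2 E)

lemma isUnit_det_Nmat (hβ1 : 0 < β) (hβ2 : β < 1) (E : V → Finset V) :
    IsUnit (Nmat β E).det :=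
  (Matrix.isUnit_iff_isUnit_det _).mp (isUnit_Nmat hβ1 hβ2 E)

lemma hasSum_geom_Nmat (hβ1 : 0 < β) (hβ2 : β < 1) (E : V → Finset V) :
    HasSum (fun t : ℕ => (β • Rmat E) ^ t) (Nmat β E)⁻¹ := by
  rw [Matrix.nonsing_inv_eq_ringInverse]
  exact hasSum_geom_series_inverse _ (smul_Rmat_norm_lt_one hβ1 hβ2 E)

/-- evaluation at an entry, as a continuous linear map -/
noncomputable def entryCLM (j k : V) : Matrix V V ℝ →L[ℝ] ℝ :=
  LinearMap.toContinuousLinearMap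
    { toFun := fun A : Matrix V V ℝ => A j k
      map_add' := fun A B => rfl
      map_smul' := fun c A => rfl }

lemma hasSum_geom_Nmat_entry (hβ1 : 0 < β) (hβ2 : β < 1) (E : V → Finset V) (j k : V) :
    HasSum (fun t : ℕ => ((β • Rmat E) ^ t) j k) ((Nmat β E)⁻¹ j k) :=
  (hasSum_geom_Nmat hβ1 hβ2 E).mapL (entryCLM j k)

lemma pow_entry_nonneg (hβ1 : 0 < β) (E : V → Finset V) (t : ℕ) (j k : V) :
    0 ≤ ((β • Rmat E) ^ t) j k := by
  induction t generalizing j k with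
  | zero =>
      rw [pow_zero]
      by_cases h : j = k <;> simp [Matrix.one_apply, h]
  | succ t ih =>
      rw [pow_succ, Matrix.mul_apply]
      refine Finset.sum_nonneg fun m _ => mul_nonneg (ih j m) ?_
      simp only [Matrix.smul_apply, smul_eq_mul]
      exact mul_nonneg hβ1.le (Rmat_nonneg E m k)

lemma inv_Nmat_entry_nonneg (hβ1 : 0 < β) (hβ2 : β < 1) (E : V → Finset V) (j k : V) :
    0 ≤ (Nmat β E)⁻¹ j k :=
  (hasSum_geom_Nmat_entry hβ1 hβ2 E j k).nonneg (fun t => pow_entry_nonneg hβ1 E t j k)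

lemma inv_Nmat_entry_pos (hβ1 : 0 < β) (hβ2 : β < 1) (E : V → Finset V) (j k : V)
    (hpath : Relation.ReflTransGen (fun a b => b ∈ E a) j k) :
    0 < (Nmat β E)⁻¹ j k := by
  have hterm : ∃ t : ℕ, 0 < ((β • Rmat E) ^ t) j k := by
    induction hpath using Relation.ReflTransGen.head_induction_on with
    | refl => exact ⟨0, by simp [Matrix.one_apply]⟩
    | head hab _ ih =>
        obtain ⟨t, ht⟩ := ih
        rename_i a b _
        refine ⟨t + 1, ?_⟩
        rw [pow_succ', Matrix.mul_apply]
        have hab' : 0 < (β • Rmat E) a b := by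
          simp only [Matrix.smul_apply, smul_eq_mul]
          have hcard : 0 < (E a).card := Finset.card_pos.mpr ⟨b, hab⟩
          unfold Rmat
          simp only [Matrix.of_apply, hab, if_true]
          positivity
        refine Finset.sum_pos' (fun m _ => mul_nonneg ?_ ?_) ⟨b, Finset.mem_univ b, ?_⟩
        · simp only [Matrix.smul_apply, smul_eq_mul]
          exact mul_nonneg hβ1.le (Rmat_nonneg E a m)
        · exact pow_entry_nonneg hβ1 E t m k
        · exact mul_pos hab' ht
  obtain ⟨t, ht⟩ := hterm
  calc (0:ℝ) < ((β • Rmat E) ^ t) j k := ht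
    _ ≤ (Nmat β E)⁻¹ j k :=
        le_hasSum (hasSum_geom_Nmat_entry hβ1 hβ2 E j k) t
          (fun t' _ => pow_entry_nonneg hβ1 E t' j k)

lemma inv_Nmat_recursion (hβ1 : 0 < β) (hβ2 : β < 1) (E : V → Finset V) :
    (Nmat β E)⁻¹ = 1 + (β • Rmat E) * (Nmat β E)⁻¹ := by
  have h := Matrix.mul_nonsing_inv _ (isUnit_det_Nmat hβ1 hβ2 E)
  have : (Nmat β E) * (Nmat β E)⁻¹ = (Nmat β E)⁻¹ - (β • Rmat E) * (Nmat β E)⁻¹ := by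
    rw [Nmat, Matrix.sub_mul, Matrix.one_mul]
  rw [this] at h
  linear_combination (norm := abel_nf) h


lemma pagerank_eq (η : V → ℝ) (E : V → Finset V) (i : V) :
    pagerank β η E i = (1 - β) * (((Nmat β E)ᵀ)⁻¹ *ᵥ η) i := by
  have h : (1 : Matrix V V ℝ) -
      β • (Matrix.of fun j k : V => if k ∈ E j then ((E j).card : ℝ)⁻¹ else 0)ᵀ
      = (Nmat β E)ᵀ := by
    rw [Nmat, Matrix.transpose_sub, Matrix.transpose_one, Matrix.transpose_smul]
    rfl
  rw [pagerank, h]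
  simp [Matrix.mulVec]

lemma det_Nmat_pos (hβ1 : 0 < β) (hβ2 : β < 1) (E : V → Finset V) :
    0 < (Nmat β E).det := by
  set C := β • Rmat E with hC
  have hCn : ‖C‖ < 1 := smul_Rmat_norm_lt_one hβ1 hβ2 E
  have hunit : ∀ t : ℝ, |t| ≤ 1 → IsUnit ((1 : Matrix V V ℝ) - t • C).det := by
    intro t ht
    have h1 : ‖t • C‖ < 1 := by
      calc ‖t • C‖ = ‖t‖ * ‖C‖ := norm_smul t C
        _ ≤ 1 * ‖C‖ := mul_le_mul_of_nonneg_right (by rwa [Real.norm_eq_abs]) (norm_nonneg _)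
        _ < 1 := by rwa [one_mul]
    have h2 : IsUnit ((1 : Matrix V V ℝ) - t • C) := isUnit_one_sub_of_norm_lt_one h1
    exact (Matrix.isUnit_iff_isUnit_det _).mp h2
  have hcont : Continuous (fun t : ℝ => ((1 : Matrix V V ℝ) - t • C).det) :=
    (continuous_const.sub (continuous_id.smul continuous_const)).matrix_det
  by_contra hle
  push_neg at hle
  have hNe : (Nmat β E) = (1 : Matrix V V ℝ) - (1:ℝ) • C := by rw [one_smul, Nmat, hC]
  have h1 : ((1 : Matrix V V ℝ) - (1:ℝ) • C).det < 0 := by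
    rw [← hNe]
    have hne : (Nmat β E).det ≠ 0 := by
      have := (hunit 1 (by norm_num)).ne_zero
      rwa [← hNe] at this
    exact lt_of_le_of_ne hle hne
  have h0 : ((1 : Matrix V V ℝ) - (0:ℝ) • C).det = 1 := by simp
  have hmem : (0:ℝ) ∈ (fun t : ℝ => ((1 : Matrix V V ℝ) - t • C).det) '' Set.Icc 0 1 := by
    apply intermediate_value_Icc' (by norm_num : (0:ℝ) ≤ 1) hcont.continuousOn
    exact ⟨h1.le, by rw [h0]; norm_num⟩
  obtain ⟨t, ht, h⟩ := hmem
  have h' : ((1 : Matrix V V ℝ) - t • C).det = 0 := h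
  have := hunit t (by rw [abs_of_nonneg ht.1]; exact ht.2)
  rw [h'] at this
  exact this.ne_zero rfl |>.elim

lemma det_Nmat_transpose_pos (hβ1 : 0 < β) (hβ2 : β < 1) (E : V → Finset V) :
    0 < ((Nmat β E)ᵀ).det := by
  rw [Matrix.det_transpose]; exact det_Nmat_pos hβ1 hβ2 E

/-- Cramer's rule, entry form. -/
lemma mulVec_inv_entry (hβ1 : 0 < β) (hβ2 : β < 1) (E : V → Finset V) (b : V → ℝ) (i : V) :
    (((Nmat β E)ᵀ)⁻¹ *ᵥ b) i
      = (((Nmat β E)ᵀ).det)⁻¹ * (((Nmat β E)ᵀ).updateCol i b).det := by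
  have hd : ((Nmat β E)ᵀ).det ≠ 0 := (det_Nmat_transpose_pos hβ1 hβ2 E).ne'
  have h := Matrix.det_smul_inv_mulVec_eq_cramer ((Nmat β E)ᵀ) b hd.isUnit
  have h2 : ((Nmat β E)ᵀ).det * ((((Nmat β E)ᵀ)⁻¹) *ᵥ b) i
      = (((Nmat β E)ᵀ).updateCol i b).det := by
    have := congrFun h i
    simpa [Matrix.cramer_apply] using this
  rw [← h2, inv_mul_cancel_left₀ hd]


/-- first-passage generating function to `i`. -/
noncomputable def Tf (β : ℝ) (x : V → Finset V) (i : V) : V → ℝ :=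
  fun j => (Nmat β (Function.update x i ∅))⁻¹ j i

lemma Rmat_update_empty_self (x : V → Finset V) (i m : V) :
    Rmat (Function.update x i ∅) i m = 0 := by
  unfold Rmat
  simp [Function.update_self]

lemma Tf_self (hβ1 : 0 < β) (hβ2 : β < 1) (x : V → Finset V) (i : V) :
    Tf β x i i = 1 := by
  have h := congrFun (congrFun (inv_Nmat_recursion hβ1 hβ2 (Function.update x i ∅)) i) i
  rw [Matrix.add_apply, Matrix.mul_apply] at h
  unfold Tf
  rw [h, Matrix.one_apply_eq]
  have : ∀ m : V, (β • Rmat (Function.update x i ∅)) i m *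
      (Nmat β (Function.update x i ∅))⁻¹ m i = 0 := by
    intro m
    rw [Matrix.smul_apply, Rmat_update_empty_self, smul_zero, zero_mul]
  rw [Finset.sum_congr rfl fun m _ => this m, Finset.sum_const_zero, add_zero]

lemma Tf_rec (hβ1 : 0 < β) (hβ2 : β < 1) (x : V → Finset V) (i p : V) (hp : p ≠ i) :
    Tf β x i p = β * ((x p).card : ℝ)⁻¹ * ∑ m ∈ x p, Tf β x i m := by
  have h := congrFun (congrFun (inv_Nmat_recursion hβ1 hβ2 (Function.update x i ∅)) p) i
  rw [Matrix.add_apply, Matrix.mul_apply, Matrix.one_apply_ne hp] at h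
  unfold Tf
  rw [h, zero_add]
  have hxp : Function.update x i ∅ p = x p := Function.update_of_ne hp _ _
  have : ∀ m : V, (β • Rmat (Function.update x i ∅)) p m *
      (Nmat β (Function.update x i ∅))⁻¹ m i
      = if m ∈ x p then β * ((x p).card : ℝ)⁻¹ * (Nmat β (Function.update x i ∅))⁻¹ m i
        else 0 := by
    intro m
    rw [Matrix.smul_apply]
    unfold Rmat
    simp only [Matrix.of_apply, hxp, smul_eq_mul]
    split
    · ring
    · ring
  rw [Finset.sum_congr rfl fun m _ => this m, Finset.sum_ite_mem, Finset.univ_inter,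
    Finset.mul_sum]

lemma Tf_pos (hβ1 : 0 < β) (hβ2 : β < 1) (x : V → Finset V) (i : V)
    (hsc : ∀ j, Relation.ReflTransGen (fun a b => b ∈ x a) j i) (j : V) :
    0 < Tf β x i j := by
  apply inv_Nmat_entry_pos hβ1 hβ2
  have : ∀ j, Relation.ReflTransGen (fun a b => b ∈ x a) j i →
      Relation.ReflTransGen (fun a b => b ∈ Function.update x i ∅ a) j i := by
    intro j hj
    induction hj using Relation.ReflTransGen.head_induction_on with
    | refl => exact Relation.ReflTransGen.refl
    | head hab htail ih =>
        rename_i a b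
        by_cases ha : a = i
        · exact ha ▸ Relation.ReflTransGen.refl
        · exact Relation.ReflTransGen.head
            (by rwa [Function.update_of_ne ha]) ih
  exact this j (hsc j)


lemma updateColumn_indep (x : V → Finset V) (i : V) (s : Finset V) (v : V → ℝ) :
    ((Nmat β (Function.update x i s))ᵀ).updateCol i v
      = ((Nmat β (Function.update x i ∅))ᵀ).updateCol i v := by
  ext r c
  by_cases hc : c = i
  · subst hc
    rw [Matrix.updateCol_apply, Matrix.updateCol_apply, if_pos rfl, if_pos rfl]
  · rw [Matrix.updateCol_apply, Matrix.updateCol_apply, if_neg hc, if_neg hc,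
      Matrix.transpose_apply, Matrix.transpose_apply]
    unfold Nmat Rmat
    simp only [Matrix.sub_apply, Matrix.smul_apply, Matrix.of_apply, smul_eq_mul,
      Function.update_of_ne hc]

lemma sum_single_apply (s : Finset V) (r : V) :
    (∑ j ∈ s, Pi.single j (1:ℝ)) r = if r ∈ s then 1 else 0 := by
  rw [Finset.sum_apply]
  simp [Pi.single_apply]

lemma det_updateColumn_finset_sum (A : Matrix V V ℝ) (i : V) (s : Finset V) (f : V → V → ℝ) :
    (A.updateCol i (∑ j ∈ s, f j)).det = ∑ j ∈ s, (A.updateCol i (f j)).det := by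
  classical
  induction s using Finset.induction_on with
  | empty =>
      rw [Finset.sum_empty, Finset.sum_empty]
      refine Matrix.det_eq_zero_of_column_eq_zero i (fun r => ?_)
      rw [Matrix.updateCol_apply, if_pos rfl]
      rfl
  | insert _ _ h ih =>
      rename_i a s'
      rw [Finset.sum_insert h, Matrix.det_updateCol_add, ih, Finset.sum_insert h]

lemma col_empty (x : V → Finset V) (i : V) :
    (fun r => (Nmat β (Function.update x i ∅))ᵀ r i) = Pi.single i (1:ℝ) := by
  funext r
  rw [Matrix.transpose_apply]
  unfold Nmat
  rw [Matrix.sub_apply, Matrix.smul_apply, Rmat_update_empty_self, smul_zero, sub_zero,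
    Matrix.one_apply, Pi.single_apply]
  simp [eq_comm]

lemma det_M_empty_updateColumn_single (x : V → Finset V) (i : V) :
    (((Nmat β (Function.update x i ∅))ᵀ).updateCol i (Pi.single i 1)).det
      = ((Nmat β (Function.update x i ∅))ᵀ).det := by
  rw [← col_empty x i, Matrix.updateCol_eq_self]

lemma det_M_update (x : V → Finset V) (i : V) (s : Finset V) :
    ((Nmat β (Function.update x i s))ᵀ).det
      = ((Nmat β (Function.update x i ∅))ᵀ).det
        - β * ((s.card : ℝ))⁻¹ * ∑ j ∈ s,
            (((Nmat β (Function.update x i ∅))ᵀ).updateCol i (Pi.single j 1)).det := by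
  set M := (Nmat β (Function.update x i s))ᵀ with hM
  have h1 : M.det = (M.updateCol i (fun r => M r i)).det := by
    rw [Matrix.updateCol_eq_self]
  have hcol : (fun r => M r i)
      = (Pi.single i (1:ℝ)) + (-(β * ((s.card : ℝ))⁻¹)) • (∑ j ∈ s, Pi.single j (1:ℝ)) := by
    funext r
    simp only [Pi.add_apply, Pi.smul_apply, smul_eq_mul]
    rw [sum_single_apply, hM, Matrix.transpose_apply]
    unfold Nmat Rmat
    rw [Matrix.sub_apply, Matrix.smul_apply, Matrix.of_apply, Function.update_self,
      Matrix.one_apply, Pi.single_apply, smul_eq_mul]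
    by_cases hr : r ∈ s <;> by_cases hri : i = r <;>
      simp [hr, hri, eq_comm] <;> ring
  rw [h1, hcol, Matrix.det_updateCol_add, Matrix.det_updateCol_smul,
    det_updateColumn_finset_sum, hM, updateColumn_indep x i s,
    det_M_empty_updateColumn_single]
  have : ∀ j ∈ s, ((((Nmat β (Function.update x i s))ᵀ).updateCol i (Pi.single j 1)).det)
      = ((((Nmat β (Function.update x i ∅))ᵀ).updateCol i (Pi.single j 1)).det) := by
    intro j _
    rw [updateColumn_indep x i s]
  rw [Finset.sum_congr rfl this]
  ring

lemma W_eq (hβ1 : 0 < β) (hβ2 : β < 1) (x : V → Finset V) (i j : V) :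
    (((Nmat β (Function.update x i ∅))ᵀ).updateCol i (Pi.single j 1)).det
      = ((Nmat β (Function.update x i ∅))ᵀ).det * Tf β x i j := by
  have h := mulVec_inv_entry hβ1 hβ2 (Function.update x i ∅) (Pi.single j (1:ℝ)) i
  have h2 : ((((Nmat β (Function.update x i ∅))ᵀ)⁻¹) *ᵥ Pi.single j (1:ℝ)) i
      = Tf β x i j := by
    rw [← Matrix.transpose_nonsing_inv, Matrix.mulVec_single]
    unfold Tf
    show (Nmat β (Function.update x i ∅))⁻¹ᵀ i j * 1 = _
    rw [Matrix.transpose_apply, mul_one]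
  rw [h2] at h
  have hd : ((Nmat β (Function.update x i ∅))ᵀ).det ≠ 0 :=
    (det_Nmat_transpose_pos hβ1 hβ2 _).ne'
  rw [h, mul_inv_cancel_left₀ hd]

lemma pagerank_update_eq (hβ1 : 0 < β) (hβ2 : β < 1) (η : V → ℝ)
    (x : V → Finset V) (i : V) (s : Finset V) :
    pagerank β η (Function.update x i s) i
      = (1 - β) * (((Nmat β (Function.update x i s))ᵀ).det)⁻¹
          * (((Nmat β (Function.update x i ∅))ᵀ).updateCol i η).det := by
  rw [pagerank_eq, mulVec_inv_entry hβ1 hβ2, updateColumn_indep]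
  ring

lemma numer_pos (hβ1 : 0 < β) (hβ2 : β < 1) (η : V → ℝ)
    (hη0 : ∀ v, 0 ≤ η v) (hη1 : ∑ v, η v = 1) (x : V → Finset V) (i : V)
    (hsc : ∀ v, Relation.ReflTransGen (fun a b => b ∈ x a) v i) :
    0 < (((Nmat β (Function.update x i ∅))ᵀ).updateCol i η).det := by
  have hupd : Function.update x i (x i) = x := Function.update_eq_self i x
  have h1 : (((Nmat β (Function.update x i ∅))ᵀ).updateCol i η).det
      = (((Nmat β x)ᵀ).updateCol i η).det := by
    rw [← updateColumn_indep x i (x i) η, hupd]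
  rw [h1]
  have h := mulVec_inv_entry hβ1 hβ2 x η i
  have hd : 0 < ((Nmat β x)ᵀ).det := det_Nmat_transpose_pos hβ1 hβ2 x
  have hmv : 0 < (((Nmat β x)ᵀ)⁻¹ *ᵥ η) i := by
    rw [← Matrix.transpose_nonsing_inv]
    have hmv2 : ((Nmat β x)⁻¹ᵀ *ᵥ η) i = ∑ v : V, (Nmat β x)⁻¹ v i * η v := by
      rw [Matrix.mulVec, dotProduct]
      exact Finset.sum_congr rfl fun v _ => by rw [Matrix.transpose_apply]
    rw [hmv2]
    obtain ⟨v0, hv0⟩ : ∃ v, 0 < η v := by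
      by_contra hno
      push_neg at hno
      have : ∑ v : V, η v ≤ 0 := Finset.sum_nonpos fun v _ => hno v
      rw [hη1] at this; linarith
    refine Finset.sum_pos' (fun v _ => mul_nonneg (inv_Nmat_entry_nonneg hβ1 hβ2 x v i) (hη0 v))
      ⟨v0, Finset.mem_univ v0, mul_pos (inv_Nmat_entry_pos hβ1 hβ2 x v0 i (hsc v0)) hv0⟩
  have h2 := mul_pos hd hmv
  rw [h, mul_inv_cancel_left₀ hd.ne'] at h2
  exact h2

lemma nash_sum_le (hβ1 : 0 < β) (hβ2 : β < 1) (η : V → ℝ)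
    (hη0 : ∀ v, 0 ≤ η v) (hη1 : ∑ v, η v = 1) (d : V → ℕ) (x : V → Finset V)
    (hval : ValidConf d x)
    (hnash : ∀ i (b : Finset V), i ∉ b → b.card = d i →
      pagerank β η (Function.update x i b) i ≤ pagerank β η x i)
    (hsc : ∀ a b : V, Relation.ReflTransGen (fun a b => b ∈ x a) a b)
    (i : V) (hdi : 1 ≤ d i)
    (b : Finset V) (hib : i ∉ b) (hcard : b.card = d i) :
    ∑ j ∈ b, Tf β x i j ≤ ∑ j ∈ x i, Tf β x i j := by
  have hupd : Function.update x i (x i) = x := Function.update_eq_self i x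
  set D0 := ((Nmat β (Function.update x i ∅))ᵀ).det with hD0
  set Num := (((Nmat β (Function.update x i ∅))ᵀ).updateCol i η).det with hNum
  have hNumpos : 0 < Num := numer_pos hβ1 hβ2 η hη0 hη1 x i (fun v => hsc v i)
  have hD0pos : 0 < D0 := det_Nmat_transpose_pos hβ1 hβ2 _
  have hx : pagerank β η x i = (1 - β) * (((Nmat β x)ᵀ).det)⁻¹ * Num := by
    conv_lhs => rw [← hupd]
    rw [pagerank_update_eq hβ1 hβ2 η x i (x i), hupd]
  have hb : pagerank β η (Function.update x i b) i
      = (1 - β) * (((Nmat β (Function.update x i b))ᵀ).det)⁻¹ * Num :=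
    pagerank_update_eq hβ1 hβ2 η x i b
  have hexp : ∀ s : Finset V, s.card = d i →
      ((Nmat β (Function.update x i s))ᵀ).det
        = D0 - β * ((d i : ℝ))⁻¹ * (D0 * ∑ j ∈ s, Tf β x i j) := by
    intro s hs
    rw [det_M_update x i s, hs]
    have hws : ∑ j ∈ s, (((Nmat β (Function.update x i ∅))ᵀ).updateCol i (Pi.single j 1)).det
        = D0 * ∑ j ∈ s, Tf β x i j := by
      rw [Finset.mul_sum]
      exact Finset.sum_congr rfl (fun j _ => W_eq hβ1 hβ2 x i j)
    rw [hws]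
  have hDx : ((Nmat β x)ᵀ).det = D0 - β * ((d i : ℝ))⁻¹ * (D0 * ∑ j ∈ x i, Tf β x i j) := by
    conv_lhs => rw [← hupd]
    exact hexp (x i) (hval i).2
  have hDb : ((Nmat β (Function.update x i b))ᵀ).det
      = D0 - β * ((d i : ℝ))⁻¹ * (D0 * ∑ j ∈ b, Tf β x i j) := hexp b hcard
  have hDxpos : 0 < ((Nmat β x)ᵀ).det := det_Nmat_transpose_pos hβ1 hβ2 x
  have hDbpos : 0 < ((Nmat β (Function.update x i b))ᵀ).det := det_Nmat_transpose_pos hβ1 hβ2 _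
  have hnle := hnash i b hib hcard
  rw [hx, hb] at hnle
  have h1β : (0:ℝ) < 1 - β := by linarith
  have hinv : (((Nmat β (Function.update x i b))ᵀ).det)⁻¹ ≤ (((Nmat β x)ᵀ).det)⁻¹ := by
    have h2 : (1 - β) * (((Nmat β (Function.update x i b))ᵀ).det)⁻¹
        ≤ (1 - β) * (((Nmat β x)ᵀ).det)⁻¹ := le_of_mul_le_mul_right hnle hNumpos
    exact le_of_mul_le_mul_left h2 h1β
  have hDle : ((Nmat β x)ᵀ).det ≤ ((Nmat β (Function.update x i b))ᵀ).det := by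
    set Dx := ((Nmat β x)ᵀ).det
    set Db := ((Nmat β (Function.update x i b))ᵀ).det
    have e1 : Db * Db⁻¹ = 1 := mul_inv_cancel₀ hDbpos.ne'
    have e2 : Dx * Dx⁻¹ = 1 := mul_inv_cancel₀ hDxpos.ne'
    calc Dx = Dx * (Db * Db⁻¹) := by rw [e1, mul_one]
      _ = (Dx * Db) * Db⁻¹ := by ring
      _ ≤ (Dx * Db) * Dx⁻¹ := mul_le_mul_of_nonneg_left hinv (mul_pos hDxpos hDbpos).le
      _ = Db * (Dx * Dx⁻¹) := by ring
      _ = Db := by rw [e2, mul_one]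
  rw [hDx, hDb] at hDle
  have hc : (0:ℝ) < β * ((d i : ℝ))⁻¹ * D0 := by
    have : (0:ℝ) < (d i : ℝ) := by exact_mod_cast hdi
    positivity
  have h3 : (β * ((d i : ℝ))⁻¹ * D0) * (∑ j ∈ b, Tf β x i j)
      ≤ (β * ((d i : ℝ))⁻¹ * D0) * (∑ j ∈ x i, Tf β x i j) := by nlinarith [hDle]
  exact le_of_mul_le_mul_left h3 hc

lemma exchange (hβ1 : 0 < β) (hβ2 : β < 1) (η : V → ℝ)
    (hη0 : ∀ v, 0 ≤ η v) (hη1 : ∑ v, η v = 1) (d : V → ℕ) (x : V → Finset V)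
    (hval : ValidConf d x)
    (hnash : ∀ i (b : Finset V), i ∉ b → b.card = d i →
      pagerank β η (Function.update x i b) i ≤ pagerank β η x i)
    (hsc : ∀ a b : V, Relation.ReflTransGen (fun a b => b ∈ x a) a b)
    (i : V) (hdi : 1 ≤ d i) (k q : V) (hk : k ∈ x i) (hq : q ∉ x i) (hqi : q ≠ i) :
    Tf β x i q ≤ Tf β x i k := by
  have hqe : q ∉ (x i).erase k := fun h => hq (Finset.mem_of_mem_erase h)
  have hmem : i ∉ insert q ((x i).erase k) := by
    intro hmem
    rcases Finset.mem_insert.mp hmem with h | h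
    · exact hqi h.symm
    · exact (hval i).1 (Finset.mem_of_mem_erase h)
  have hcard : (insert q ((x i).erase k)).card = d i := by
    rw [Finset.card_insert_of_notMem hqe, Finset.card_erase_of_mem hk, (hval i).2]
    have := (hval i).2 ▸ Finset.card_pos.mpr ⟨k, hk⟩
    omega
  have hb := nash_sum_le hβ1 hβ2 η hη0 hη1 d x hval hnash hsc i hdi
    (insert q ((x i).erase k)) hmem hcard
  rw [Finset.sum_insert hqe, Finset.sum_erase_eq_sub hk] at hb
  linarith

lemma nash_local (hβ1 : 0 < β) (hβ2 : β < 1) (η : V → ℝ)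
    (hη0 : ∀ v, 0 ≤ η v) (hη1 : ∑ v, η v = 1) (d : V → ℕ) (hd1 : ∀ i, 1 ≤ d i)
    (x : V → Finset V) (hval : ValidConf d x)
    (hnash : ∀ i (b : Finset V), i ∉ b → b.card = d i →
      pagerank β η (Function.update x i b) i ≤ pagerank β η x i)
    (hsc : ∀ a b : V, Relation.ReflTransGen (fun a b => b ∈ x a) a b) (i : V) :
    (∃ j ∈ x i, i ∈ x j) ∧
      ∀ p ∈ x i, i ∉ x p → ∃ p' j, p' ∈ x i ∧ i ∉ x p' ∧ j ∈ x p' ∧ j ∈ x i ∧ i ∈ x j := by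
  have hTpos : ∀ j, 0 < Tf β x i j := Tf_pos hβ1 hβ2 x i (fun j => hsc j i)
  have hex : ∀ k, k ∈ x i → ∀ q, q ∉ x i → q ≠ i → Tf β x i q ≤ Tf β x i k :=
    fun k hk q hq hqi => exchange hβ1 hβ2 η hη0 hη1 d x hval hnash hsc i (hd1 i) k q hk hq hqi
  have hstep : ∀ p, p ∈ x i → i ∉ x p →
      ∃ m, m ∈ x p ∧ m ∈ x i ∧ Tf β x i p < Tf β x i m := by
    intro p hp hnp
    have hpne : (x p).Nonempty := Finset.card_pos.mp (by rw [(hval p).2]; exact hd1 p)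
    obtain ⟨m, hm, hmax⟩ := Finset.exists_max_image (x p) (Tf β x i) hpne
    have hpi : p ≠ i := fun h => (hval i).1 (h ▸ hp)
    have hrec := Tf_rec hβ1 hβ2 x i p hpi
    have hcard1 : 1 ≤ (x p).card := by rw [(hval p).2]; exact hd1 p
    have hcard : (0:ℝ) < ((x p).card : ℝ) := by exact_mod_cast hcard1
    have hsum : ∑ m' ∈ x p, Tf β x i m' ≤ ((x p).card : ℝ) * Tf β x i m := by
      have := Finset.sum_le_card_nsmul (x p) (Tf β x i) (Tf β x i m) (fun a ha => hmax a ha)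
      rwa [nsmul_eq_mul] at this
    have hTm : 0 < Tf β x i m := hTpos m
    have h1 : Tf β x i p ≤ β * Tf β x i m := by
      rw [hrec]
      calc β * ((x p).card : ℝ)⁻¹ * ∑ m' ∈ x p, Tf β x i m'
          ≤ β * ((x p).card : ℝ)⁻¹ * (((x p).card : ℝ) * Tf β x i m) :=
            mul_le_mul_of_nonneg_left hsum (by positivity)
        _ = β * Tf β x i m := by field_simp
    have hlt : Tf β x i p < Tf β x i m := lt_of_le_of_lt h1 (by nlinarith)
    have hmi : m ≠ i := fun h => hnp (h ▸ hm)
    have hmxi : m ∈ x i := by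
      by_contra hmx
      exact absurd (hex p hp m hmx hmi) (not_le.mpr hlt)
    exact ⟨m, hm, hmxi, hlt⟩
  constructor
  · have hine : (x i).Nonempty := Finset.card_pos.mp (by rw [(hval i).2]; exact hd1 i)
    obtain ⟨j, hj, hjmax⟩ := Finset.exists_max_image (x i) (Tf β x i) hine
    refine ⟨j, hj, ?_⟩
    by_contra hnij
    obtain ⟨m, _, hmxi, hlt⟩ := hstep j hj hnij
    exact absurd (hjmax m hmxi) (not_le.mpr hlt)
  · intro p hp hnp
    have main : ∀ n (p : V), p ∈ x i → i ∉ x p →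
        ((x i).filter fun q => Tf β x i p < Tf β x i q).card = n →
        ∃ p' j, p' ∈ x i ∧ i ∉ x p' ∧ j ∈ x p' ∧ j ∈ x i ∧ i ∈ x j := by
      intro n
      induction n using Nat.strong_induction_on with
      | _ n ih =>
        intro p hp hnp hn
        obtain ⟨m, hm, hmxi, hlt⟩ := hstep p hp hnp
        by_cases him : i ∈ x m
        · exact ⟨p, m, hp, hnp, hm, hmxi, him⟩
        · have hsubset : ((x i).filter fun q => Tf β x i m < Tf β x i q)
              ⊆ ((x i).filter fun q => Tf β x i p < Tf β x i q) := by
            intro q hq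
            rw [Finset.mem_filter] at hq ⊢
            exact ⟨hq.1, lt_trans hlt hq.2⟩
          have hss : ((x i).filter fun q => Tf β x i m < Tf β x i q)
              ⊂ ((x i).filter fun q => Tf β x i p < Tf β x i q) := by
            rw [Finset.ssubset_iff_of_subset hsubset]
            exact ⟨m, Finset.mem_filter.mpr ⟨hmxi, hlt⟩,
              fun hc => absurd (Finset.mem_filter.mp hc).2 (lt_irrefl _)⟩
          exact ih _ (by rw [← hn]; exact Finset.card_lt_card hss) m hmxi him rfl
    exact main _ p hp hnp rfl

end NashPR

/-- Lower bounds on the number of undirected links (`c₂`, counted as unordered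
pairs, so `2c₂` ordered reciprocal pairs) and of 3-cycles (`c₃`, each counted once,
i.e. `3c₃` ordered directed triangles) in a strongly connected Nash equilibrium:
`2c₂ ≥ n` and `d⋆ c₃ + 2c₂ ≥ n d⋆`, where `d⋆` is the minimum out-degree. -/
theorem nash_undirected_links_and_triangles
    (β : ℝ) (hβ : β ∈ Set.Ioo (0 : ℝ) 1)
    (η : V → ℝ) (hη0 : ∀ v, 0 ≤ η v) (hη1 : ∑ v, η v = 1)
    (d : V → ℕ) (hd : ∀ i, 1 ≤ d i ∧ d i ≤ Fintype.card V - 1)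
    (x : V → Finset V) (hnash : NashEq β η d x)
    (hsc : ∀ i j : V, Relation.ReflTransGen (fun a b => b ∈ x a) i j)
    (dstar : ℕ) (hds1 : ∃ i, d i = dstar) (hds2 : ∀ i, dstar ≤ d i)
    (c2 c3 : ℕ)
    (hc2 : 2 * c2 = (Finset.univ.filter
      (fun p : V × V => p.2 ∈ x p.1 ∧ p.1 ∈ x p.2)).card)
    (hc3 : 3 * c3 = (Finset.univ.filter
      (fun t : V × V × V => t.2.1 ∈ x t.1 ∧ t.2.2 ∈ x t.2.1 ∧ t.1 ∈ x t.2.2 ∧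
        t.1 ≠ t.2.1 ∧ t.2.1 ≠ t.2.2 ∧ t.1 ≠ t.2.2)).card) :
    Fintype.card V ≤ 2 * c2 ∧
    Fintype.card V * dstar ≤ dstar * c3 + 2 * c2 := by
  obtain ⟨hβ1, hβ2⟩ := hβ
  obtain ⟨hval, hnash2⟩ := hnash
  have hd1 : ∀ i, 1 ≤ d i := fun i => (hd i).1
  have hloc := fun i => NashPR.nash_local hβ1 hβ2 η hη0 hη1 d hd1 x hval hnash2 hsc i
  set r : V → ℕ := fun i => ((x i).filter fun j => i ∈ x j).card with hr
  have hr1 : ∀ i, 1 ≤ r i := by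
    intro i
    obtain ⟨j, hj, hij⟩ := (hloc i).1
    exact Finset.card_pos.mpr ⟨j, Finset.mem_filter.mpr ⟨hj, hij⟩⟩
  have hsum_r : ∑ i : V, r i = 2 * c2 := by
    rw [hc2]
    rw [Finset.card_eq_sum_card_fiberwise
      (f := fun p : V × V => p.1) (t := Finset.univ) (fun _ _ => Finset.mem_univ _)]
    refine (Finset.sum_congr rfl fun i _ => ?_).symm
    simp only [hr]
    refine Finset.card_bij (fun p _ => p.2) ?_ ?_ ?_
    · intro p hp
      simp only [Finset.mem_filter, Finset.mem_univ, true_and] at hp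
      obtain ⟨⟨h1, h2⟩, h3⟩ := hp
      subst h3
      exact Finset.mem_filter.mpr ⟨h1, h2⟩
    · intro p hp q hq hpq
      simp only [Finset.mem_filter] at hp hq
      exact Prod.ext (hp.2.trans hq.2.symm) hpq
    · intro j hj
      simp only [Finset.mem_filter] at hj
      exact ⟨(i, j), Finset.mem_filter.mpr
        ⟨Finset.mem_filter.mpr ⟨Finset.mem_univ _, hj.1, hj.2⟩, rfl⟩, rfl⟩
  have claim1 : Fintype.card V ≤ 2 * c2 := by
    calc Fintype.card V = ∑ _i : V, 1 := by rw [Finset.sum_const, Finset.card_univ, smul_eq_mul, mul_one]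
      _ ≤ ∑ i : V, r i := Finset.sum_le_sum fun i _ => hr1 i
      _ = 2 * c2 := hsum_r
  refine ⟨claim1, ?_⟩
  set A' : Finset V := Finset.univ.filter (fun i => r i < dstar) with hA'
  have hapex : ∀ i : V, ∃ pj : V × V, i ∈ A' →
      pj.1 ∈ x i ∧ i ∉ x pj.1 ∧ pj.2 ∈ x pj.1 ∧ pj.2 ∈ x i ∧ i ∈ x pj.2 := by
    intro i
    by_cases hi : i ∈ A'
    · have hri : r i < dstar := (Finset.mem_filter.mp hi).2
      have hne : ∃ p ∈ x i, i ∉ x p := by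
        by_contra hno
        push_neg at hno
        have hfeq : (x i).filter (fun j => i ∈ x j) = x i :=
          Finset.filter_true_of_mem fun j hj => hno j hj
        have hrd : r i = d i := by simp only [hr]; rw [hfeq]; exact (hval i).2
        have := hds2 i
        omega
      obtain ⟨p, hp, hnp⟩ := hne
      obtain ⟨p', j, hp', hnp', hjp', hji, hij⟩ := (hloc i).2 p hp hnp
      exact ⟨(p', j), fun _ => ⟨hp', hnp', hjp', hji, hij⟩⟩
    · exact ⟨(i, i), fun h => absurd h hi⟩
  choose f hf using hapex
  set S : V → Finset (V × V × V) := fun i =>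
    {(i, (f i).1, (f i).2), ((f i).1, (f i).2, i), ((f i).2, i, (f i).1)} with hS
  have hdistinct : ∀ i ∈ A', i ≠ (f i).1 ∧ (f i).1 ≠ (f i).2 ∧ i ≠ (f i).2 := by
    intro i hi
    obtain ⟨h1, h2, h3, h4, h5⟩ := hf i hi
    refine ⟨?_, ?_, ?_⟩
    · intro h; rw [← h] at h1; exact (hval i).1 h1
    · intro h; rw [h] at h2; exact h2 h5
    · intro h; rw [← h] at h4; exact (hval i).1 h4
  have hScard : ∀ i ∈ A', (S i).card = 3 := by
    intro i hi
    obtain ⟨hne1, hne2, hne3⟩ := hdistinct i hi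
    have c1 : ((f i).1, (f i).2, i) ∉ ({((f i).2, i, (f i).1)} : Finset (V × V × V)) := by
      simp only [Finset.mem_singleton, Prod.mk.injEq]
      tauto
    have c2' : (i, (f i).1, (f i).2) ∉
        ({((f i).1, (f i).2, i), ((f i).2, i, (f i).1)} : Finset (V × V × V)) := by
      simp only [Finset.mem_insert, Finset.mem_singleton, Prod.mk.injEq]
      tauto
    rw [hS]
    simp only
    rw [Finset.card_insert_of_notMem c2', Finset.card_insert_of_notMem c1,
      Finset.card_singleton]
  have hSdisj : ∀ i1 ∈ A', ∀ i2 ∈ A', i1 ≠ i2 → Disjoint (S i1) (S i2) := by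
    intro i1 hi1 i2 hi2 hne
    obtain ⟨hp1, hn1, hj1, hji1, hij1⟩ := hf i1 hi1
    obtain ⟨hp2, hn2, hj2, hji2, hij2⟩ := hf i2 hi2
    rw [Finset.disjoint_left]
    intro e he1 he2
    rw [hS] at he1 he2
    simp only [Finset.mem_insert, Finset.mem_singleton] at he1 he2
    obtain rfl | rfl | rfl := he1 <;>
      [skip; skip; skip] <;>
      simp only [Prod.mk.injEq] at he2 <;>
      obtain ⟨e1, e2, e3⟩ | ⟨e1, e2, e3⟩ | ⟨e1, e2, e3⟩ := he2
    · exact hne e1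
    · rw [e3, e1] at hji1; exact hn2 hji1
    · rw [e2] at hn1; rw [← e1] at hji2; exact hn1 hji2
    · rw [e1] at hn1; rw [← e3] at hji2; exact hn1 hji2
    · exact hne e3
    · rw [← e3] at hn2; rw [e2] at hji1; exact hn2 hji1
    · rw [← e2] at hn2; rw [e1] at hji1; exact hn2 hji1
    · rw [e3] at hn1; rw [← e2] at hji2; exact hn1 hji2
    · exact hne e2
  have hBsub : A'.biUnion S ⊆ Finset.univ.filter
      (fun t : V × V × V => t.2.1 ∈ x t.1 ∧ t.2.2 ∈ x t.2.1 ∧ t.1 ∈ x t.2.2 ∧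
        t.1 ≠ t.2.1 ∧ t.2.1 ≠ t.2.2 ∧ t.1 ≠ t.2.2) := by
    intro e he
    obtain ⟨i, hi, hei⟩ := Finset.mem_biUnion.mp he
    obtain ⟨hp1, hn1, hj1, hji1, hij1⟩ := hf i hi
    obtain ⟨hne1, hne2, hne3⟩ := hdistinct i hi
    rw [hS] at hei
    simp only [Finset.mem_insert, Finset.mem_singleton] at hei
    refine Finset.mem_filter.mpr ⟨Finset.mem_univ _, ?_⟩
    obtain rfl | rfl | rfl := hei
    · exact ⟨hp1, hj1, hij1, hne1, hne2, hne3⟩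
    · exact ⟨hj1, hij1, hp1, hne2, fun h => hne3 h.symm, fun h => hne1 h.symm⟩
    · exact ⟨hij1, hp1, hj1, fun h => hne3 h.symm, hne1, fun h => hne2 h.symm⟩
  have hA'card : A'.card ≤ c3 := by
    have h3 : (A'.biUnion S).card = 3 * A'.card := by
      rw [Finset.card_biUnion hSdisj, Finset.sum_congr rfl hScard, Finset.sum_const,
        smul_eq_mul, mul_comm]
    have hle := Finset.card_le_card hBsub
    rw [h3, ← hc3] at hle
    omega
  have hbound : ∀ i : V, dstar ≤ r i + (if i ∈ A' then dstar - 1 else 0) := by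
    intro i
    by_cases hi : i ∈ A'
    · simp only [hi, if_true]
      have := hr1 i
      omega
    · simp only [hi, if_false]
      have hnlt : ¬ (r i < dstar) := fun h => hi (Finset.mem_filter.mpr ⟨Finset.mem_univ _, h⟩)
      omega
  calc Fintype.card V * dstar = ∑ _i : V, dstar := by
        rw [Finset.sum_const, Finset.card_univ, smul_eq_mul]
    _ ≤ ∑ i : V, (r i + if i ∈ A' then dstar - 1 else 0) :=
        Finset.sum_le_sum fun i _ => hbound i
    _ = (∑ i : V, r i) + ∑ i : V, (if i ∈ A' then dstar - 1 else 0) := Finset.sum_add_distrib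
    _ = 2 * c2 + A'.card * (dstar - 1) := by
        rw [hsum_r]
        congr 1
        rw [Finset.sum_ite_mem, Finset.univ_inter, Finset.sum_const, smul_eq_mul]
    _ ≤ 2 * c2 + c3 * (dstar - 1) := by
        have := Nat.mul_le_mul_right (dstar - 1) hA'card
        omega
    _ ≤ 2 * c2 + c3 * dstar := by
        have : c3 * (dstar - 1) ≤ c3 * dstar := Nat.mul_le_mul_left _ (Nat.sub_le _ _)
        omega
    _ = dstar * c3 + 2 * c2 := by ring
end
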